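/- arXiv:2302.09866 — 3 statements merged into one kernel-verified Lean document; each statement's English description precedes it below -/
import Mathlib

section
/- Comparison principle for the discrete reaction–diffusion system: let u, v : [0,∞) → [0,1]^{T_N^d} be differentiable in time, where u is a supersolution (∂_t u(t,i) ≥ 2αN² (Δu(t,·))_i + β(1 − 2u(t,i)) + G(i, u(t,·)) for all t and i) and v is a subsolution (∂_t v(t,i) ≤ 2αN² (Δv(t,·))_i + β(1 − 2v(t,i)) + G(i, v(t,·)) for all t and i). If u(0,i) ≥ v(0,i) for all i ∈ T_N^d, then u(t,i) ≥ v(t,i) for all t ≥ 0 and all i ∈ T_N^d. -/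
open scoped BigOperators
open Finset

noncomputable section

/-- Sites of the discrete torus `T_N^d = (Z/NZ)^d`. -/
abbrev Site (d N : ℕ) := Fin d → ZMod N

/-- Configurations `{0,1}^{T_N^d}`. -/
abbrev Conf (d N : ℕ) := Site d N → Bool

/-- The unit vector `e_k` of the discrete torus. -/
def unitVec (d N : ℕ) (k : Fin d) : Site d N := fun l => if l = k then 1 else 0

/-- The local mean field `ρ_i(η) = K_N⁻¹ Σ_{j ∈ V} η_{i+j}`. -/
def rho (d N : ℕ) (V : Finset (Site d N)) (η : Conf d N) (i : Site d N) : ℝ :=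
  (∑ j ∈ V, if η (i + j) then (1 : ℝ) else 0) / (V.card : ℝ)

/-- `κ_N = min(⌊K_N T⌋ - 1, ⌊K_N (1-T)⌋)`. -/
def kappaN (K : ℕ) (T : ℝ) : ℤ := min (⌊(K : ℝ) * T⌋ - 1) ⌊(K : ℝ) * (1 - T)⌋

/-- Probability of an event `A` under the product Bernoulli measure `υ_u = ⊗_i B(u_i)`. -/
def bprob (d N : ℕ) (u : Site d N → ℝ) (A : Set (Conf d N)) : ℝ :=
  if h : N = 0 then 0 else by
    haveI : NeZero N := ⟨h⟩
    exact ∑ η : Conf d N,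
      (∏ i : Site d N, if η i then u i else 1 - u i) * A.indicator (fun _ => (1 : ℝ)) η

/-- `c_0^+(u) = P_{υ_u}[ρ_0(η) ≥ 1 - κ_N/K_N]`. -/
def cplus (d N : ℕ) (V : Finset (Site d N)) (T : ℝ) (u : Site d N → ℝ) : ℝ :=
  bprob d N u {η | rho d N V η 0 ≥ 1 - (kappaN V.card T : ℝ) / (V.card : ℝ)}

/-- `c_0^-(u) = P_{υ_u}[ρ_0(η) ≤ κ_N/K_N]`. -/
def cminus (d N : ℕ) (V : Finset (Site d N)) (T : ℝ) (u : Site d N → ℝ) : ℝ :=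
  bprob d N u {η | rho d N V η 0 ≤ (kappaN V.card T : ℝ) / (V.card : ℝ)}

/-- The reaction term `G(u) = (1-u_0) c_0^+(u) - u_0 c_0^-(u)`. -/
def Gfun (d N : ℕ) (V : Finset (Site d N)) (T : ℝ) (u : Site d N → ℝ) : ℝ :=
  (1 - u 0) * cplus d N V T u - u 0 * cminus d N V T u

/-- `G(i,u) = G(τ_i u)`. -/
def Gi (d N : ℕ) (V : Finset (Site d N)) (T : ℝ) (i : Site d N) (u : Site d N → ℝ) : ℝ :=
  Gfun d N V T (fun j => u (i + j))

/-- The discrete Laplacian `(Δu)_i = Σ_{j : |i-j|=1} (u_j - u_i)`. -/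
def discLap (d N : ℕ) (u : Site d N → ℝ) (i : Site d N) : ℝ :=
  ∑ k : Fin d, ((u (i + unitVec d N k) - u i) + (u (i - unitVec d N k) - u i))


set_option linter.unusedSectionVars false

namespace CompAux

variable {ι : Type*} [Fintype ι] [DecidableEq ι]

def wt (x : ℝ) (b : Bool) : ℝ := if b then x else 1 - x

lemma wt_nonneg {x : ℝ} (hx : x ∈ Set.Icc (0:ℝ) 1) (b : Bool) : 0 ≤ wt x b := by
  cases b <;> simp [wt] <;> linarith [hx.1, hx.2]

def Pfun (u : ι → ℝ) (f : (ι → Bool) → ℝ) : ℝ :=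
  ∑ η : ι → Bool, (∏ j, wt (u j) (η j)) * f η

lemma sum_wt (x : ℝ) : ∑ b : Bool, wt x b = 1 := by
  rw [Fintype.sum_bool]; simp [wt]

lemma sum_wprod (u : ι → ℝ) : ∑ η : ι → Bool, ∏ j, wt (u j) (η j) = 1 := by
  have h := Finset.prod_univ_sum (fun _ : ι => (Finset.univ : Finset Bool))
    (fun j b => wt (u j) b)
  rw [Fintype.piFinset_univ] at h
  rw [← h]
  have h1 : ∀ x : ι, wt (u x) true + wt (u x) false = 1 := fun x => by simp [wt]
  calc ∏ x : ι, ∑ b : Bool, wt (u x) b = ∏ _x : ι, (1:ℝ) :=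
        Finset.prod_congr rfl fun x _ => by rw [Fintype.sum_bool, h1]
    _ = 1 := Finset.prod_const_one

lemma Pfun_nonneg {u : ι → ℝ} {f : (ι → Bool) → ℝ}
    (hu : ∀ j, u j ∈ Set.Icc (0:ℝ) 1) (hf : ∀ η, 0 ≤ f η) : 0 ≤ Pfun u f :=
  Finset.sum_nonneg fun η _ => mul_nonneg
    (Finset.prod_nonneg fun j _ => wt_nonneg (hu j) _) (hf η)

lemma Pfun_le_one {u : ι → ℝ} {f : (ι → Bool) → ℝ}
    (hu : ∀ j, u j ∈ Set.Icc (0:ℝ) 1) (hf : ∀ η, f η ≤ 1) : Pfun u f ≤ 1 := by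
  rw [show (1:ℝ) = ∑ η : ι → Bool, ∏ j, wt (u j) (η j) from (sum_wprod u).symm]
  refine Finset.sum_le_sum fun η _ => ?_
  have h0 : 0 ≤ ∏ j, wt (u j) (η j) :=
    Finset.prod_nonneg fun j _ => wt_nonneg (hu j) _
  calc (∏ j, wt (u j) (η j)) * f η ≤ (∏ j, wt (u j) (η j)) * 1 :=
        mul_le_mul_of_nonneg_left (hf η) h0
    _ = _ := mul_one _

def Tb (i : ι) (w : ι → ℝ) (f : (ι → Bool) → ℝ) (b : Bool) : ℝ :=
  ∑ η ∈ Finset.univ.filter (fun η : ι → Bool => η i = b),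
    (∏ j ∈ Finset.univ.erase i, wt (w j) (η j)) * f η

lemma Pfun_update (w : ι → ℝ) (i : ι) (x : ℝ) (f : (ι → Bool) → ℝ) :
    Pfun (Function.update w i x) f = x * Tb i w f true + (1 - x) * Tb i w f false := by
  unfold Pfun Tb
  rw [← Finset.sum_filter_add_sum_filter_not Finset.univ (fun η : ι → Bool => η i = true)]
  simp only [Bool.not_eq_true]
  rw [Finset.mul_sum, Finset.mul_sum]
  congr 1
  · refine Finset.sum_congr rfl fun η hη => ?_
    have hi : η i = true := (Finset.mem_filter.mp hη).2
    rw [← Finset.mul_prod_erase Finset.univ _ (Finset.mem_univ i)]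
    have h1 : wt (Function.update w i x i) (η i) = x := by
      simp [wt, hi]
    have h2 : ∏ j ∈ Finset.univ.erase i, wt (Function.update w i x j) (η j)
        = ∏ j ∈ Finset.univ.erase i, wt (w j) (η j) :=
      Finset.prod_congr rfl fun j hj => by
        rw [Function.update_of_ne (Finset.mem_erase.mp hj).1]
    rw [h1, h2, mul_assoc]
  · refine Finset.sum_congr rfl fun η hη => ?_
    have hi : η i = false := (Finset.mem_filter.mp hη).2
    rw [← Finset.mul_prod_erase Finset.univ _ (Finset.mem_univ i)]
    have h1 : wt (Function.update w i x i) (η i) = 1 - x := by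
      simp [wt, hi]
    have h2 : ∏ j ∈ Finset.univ.erase i, wt (Function.update w i x j) (η j)
        = ∏ j ∈ Finset.univ.erase i, wt (w j) (η j) :=
      Finset.prod_congr rfl fun j hj => by
        rw [Function.update_of_ne (Finset.mem_erase.mp hj).1]
    rw [h1, h2, mul_assoc]

lemma Tb_reindex (i : ι) (w : ι → ℝ) (f : (ι → Bool) → ℝ) :
    Tb i w f true = ∑ η ∈ Finset.univ.filter (fun η : ι → Bool => η i = false),
      (∏ j ∈ Finset.univ.erase i, wt (w j) (η j)) * f (Function.update η i true) := by
  unfold Tb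
  refine Finset.sum_nbij' (fun η => Function.update η i false)
    (fun η => Function.update η i true) ?_ ?_ ?_ ?_ ?_
  · intro η _; simp
  · intro η _; simp
  · intro η hη
    have hi : η i = true := (Finset.mem_filter.mp hη).2
    funext j
    by_cases hj : j = i
    · subst hj; simp [hi]
    · simp [Function.update_of_ne hj]
  · intro η hη
    have hi : η i = false := (Finset.mem_filter.mp hη).2
    funext j
    by_cases hj : j = i
    · subst hj; simp [hi]
    · simp [Function.update_of_ne hj]
  · intro η hη
    have hi : η i = true := (Finset.mem_filter.mp hη).2
    have h2 : ∏ j ∈ Finset.univ.erase i, wt (w j) (Function.update η i false j)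
        = ∏ j ∈ Finset.univ.erase i, wt (w j) (η j) :=
      Finset.prod_congr rfl fun j hj => by
        rw [Function.update_of_ne (Finset.mem_erase.mp hj).1]
    have h3 : Function.update (Function.update η i false) i true = η := by
      funext j
      by_cases hj : j = i
      · subst hj; simp [hi]
      · simp [Function.update_of_ne hj]
    rw [h2, h3]


lemma sum_weights_false (i : ι) (w : ι → ℝ) :
    ∑ η ∈ Finset.univ.filter (fun η : ι → Bool => η i = false),
      ∏ j ∈ Finset.univ.erase i, wt (w j) (η j) = 1 := by
  have h1 : ∀ η ∈ Finset.univ.filter (fun η : ι → Bool => η i = false),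
      ∏ j ∈ Finset.univ.erase i, wt (w j) (η j)
        = ∏ j, wt (Function.update w i 0 j) (η j) := by
    intro η hη
    have hi : η i = false := (Finset.mem_filter.mp hη).2
    rw [← Finset.mul_prod_erase Finset.univ _ (Finset.mem_univ i)]
    have ha : wt (Function.update w i 0 i) (η i) = 1 := by simp [wt, hi]
    have hb : ∏ j ∈ Finset.univ.erase i, wt (Function.update w i 0 j) (η j)
        = ∏ j ∈ Finset.univ.erase i, wt (w j) (η j) :=
      Finset.prod_congr rfl fun j hj => by
        rw [Function.update_of_ne (Finset.mem_erase.mp hj).1]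
    rw [ha, hb, one_mul]
  rw [Finset.sum_congr rfl h1]
  have h2 : ∑ η ∈ Finset.univ.filter (fun η : ι → Bool => η i = true),
      ∏ j, wt (Function.update w i 0 j) (η j) = 0 :=
    Finset.sum_eq_zero fun η hη => Finset.prod_eq_zero (Finset.mem_univ i)
      (by simp [wt, (Finset.mem_filter.mp hη).2])
  have h3 := sum_wprod (Function.update w i 0)
  rw [← Finset.sum_filter_add_sum_filter_not Finset.univ
    (fun η : ι → Bool => η i = true)] at h3
  simp only [Bool.not_eq_true] at h3
  linarith

lemma Tb_mem {i : ι} {w : ι → ℝ} {f : (ι → Bool) → ℝ}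
    (hw : ∀ j, w j ∈ Set.Icc (0:ℝ) 1) (hf0 : ∀ η, 0 ≤ f η) (hf1 : ∀ η, f η ≤ 1)
    (b : Bool) : Tb i w f b ∈ Set.Icc (0:ℝ) 1 := by
  have key : ∀ g : (ι → Bool) → ℝ, (∀ η, 0 ≤ g η) → (∀ η, g η ≤ 1) →
      (∑ η ∈ Finset.univ.filter (fun η : ι → Bool => η i = false),
        (∏ j ∈ Finset.univ.erase i, wt (w j) (η j)) * g η) ∈ Set.Icc (0:ℝ) 1 := by
    intro g hg0 hg1
    constructor
    · exact Finset.sum_nonneg fun η _ => mul_nonneg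
        (Finset.prod_nonneg fun j _ => wt_nonneg (hw j) _) (hg0 η)
    · rw [← sum_weights_false i w]
      refine Finset.sum_le_sum fun η _ => ?_
      have h0 : 0 ≤ ∏ j ∈ Finset.univ.erase i, wt (w j) (η j) :=
        Finset.prod_nonneg fun j _ => wt_nonneg (hw j) _
      calc _ ≤ (∏ j ∈ Finset.univ.erase i, wt (w j) (η j)) * 1 :=
            mul_le_mul_of_nonneg_left (hg1 η) h0
        _ = _ := mul_one _
  cases b
  · exact key f hf0 hf1
  · rw [Tb_reindex]
    exact key _ (fun η => hf0 _) (fun η => hf1 _)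

/-- pointwise order used for monotone events -/
def leConf (η η' : ι → Bool) : Prop := ∀ j, η j = true → η' j = true

lemma leConf_update_true (η : ι → Bool) (i : ι) : leConf η (Function.update η i true) := by
  intro j hj
  by_cases h : j = i
  · subst h; simp
  · rwa [Function.update_of_ne h]

lemma Tb_le_Tb {i : ι} {w : ι → ℝ} {f : (ι → Bool) → ℝ}
    (hw : ∀ j, w j ∈ Set.Icc (0:ℝ) 1)
    (hf : ∀ η η', leConf η η' → f η ≤ f η') :
    Tb i w f false ≤ Tb i w f true := by
  rw [Tb_reindex]
  unfold Tb
  refine Finset.sum_le_sum fun η _ => ?_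
  exact mul_le_mul_of_nonneg_left (hf _ _ (leConf_update_true η i))
    (Finset.prod_nonneg fun j _ => wt_nonneg (hw j) _)

lemma Tb_le_Tb' {i : ι} {w : ι → ℝ} {f : (ι → Bool) → ℝ}
    (hw : ∀ j, w j ∈ Set.Icc (0:ℝ) 1)
    (hf : ∀ η η', leConf η η' → f η' ≤ f η) :
    Tb i w f true ≤ Tb i w f false := by
  rw [Tb_reindex]
  unfold Tb
  refine Finset.sum_le_sum fun η _ => ?_
  exact mul_le_mul_of_nonneg_left (hf _ _ (leConf_update_true η i))
    (Finset.prod_nonneg fun j _ => wt_nonneg (hw j) _)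

lemma Pfun_update_le_of_mono {w : ι → ℝ} {f : (ι → Bool) → ℝ} {i : ι} {x : ℝ}
    (hw : ∀ j, w j ∈ Set.Icc (0:ℝ) 1) (hx : w i ≤ x)
    (hf : ∀ η η', leConf η η' → f η ≤ f η') :
    Pfun w f ≤ Pfun (Function.update w i x) f := by
  have h0 : Pfun w f = Pfun (Function.update w i (w i)) f := by
    rw [Function.update_eq_self]
  rw [h0, Pfun_update, Pfun_update]
  have hT := Tb_le_Tb (i := i) (w := w) hw hf
  nlinarith [hT, hx]

lemma Pfun_update_le_of_anti {w : ι → ℝ} {f : (ι → Bool) → ℝ} {i : ι} {x : ℝ}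
    (hw : ∀ j, w j ∈ Set.Icc (0:ℝ) 1) (hx : w i ≤ x)
    (hf : ∀ η η', leConf η η' → f η' ≤ f η) :
    Pfun (Function.update w i x) f ≤ Pfun w f := by
  have h0 : Pfun w f = Pfun (Function.update w i (w i)) f := by
    rw [Function.update_eq_self]
  rw [h0, Pfun_update, Pfun_update]
  have hT := Tb_le_Tb' (i := i) (w := w) hw hf
  nlinarith [hT, hx]

lemma Pfun_update_lip {w : ι → ℝ} {f : (ι → Bool) → ℝ} {i : ι} {x : ℝ}
    (hw : ∀ j, w j ∈ Set.Icc (0:ℝ) 1)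
    (hf0 : ∀ η, 0 ≤ f η) (hf1 : ∀ η, f η ≤ 1) :
    |Pfun (Function.update w i x) f - Pfun w f| ≤ |x - w i| := by
  have h0 : Pfun w f = Pfun (Function.update w i (w i)) f := by
    rw [Function.update_eq_self]
  rw [h0, Pfun_update, Pfun_update]
  have hTt := Tb_mem (i := i) hw hf0 hf1 true
  have hTf := Tb_mem (i := i) hw hf0 hf1 false
  have : x * Tb i w f true + (1 - x) * Tb i w f false -
      (w i * Tb i w f true + (1 - w i) * Tb i w f false)
      = (x - w i) * (Tb i w f true - Tb i w f false) := by ring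
  rw [this, abs_mul]
  have habs : |Tb i w f true - Tb i w f false| ≤ 1 := by
    rw [abs_le]
    constructor <;> [linarith [hTt.1, hTf.2]; linarith [hTt.2, hTf.1]]
  calc |x - w i| * |Tb i w f true - Tb i w f false| ≤ |x - w i| * 1 :=
        mul_le_mul_of_nonneg_left habs (abs_nonneg _)
    _ = _ := mul_one _


lemma piecewise_mem {u u' : ι → ℝ} (hu : ∀ j, u j ∈ Set.Icc (0:ℝ) 1)
    (hu' : ∀ j, u' j ∈ Set.Icc (0:ℝ) 1) (s : Finset ι) (j : ι) :
    s.piecewise u' u j ∈ Set.Icc (0:ℝ) 1 := by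
  by_cases h : j ∈ s
  · rw [Finset.piecewise_eq_of_mem _ _ _ h]; exact hu' j
  · rw [Finset.piecewise_eq_of_notMem _ _ _ h]; exact hu j

lemma Pfun_mono {u u' : ι → ℝ} {f : (ι → Bool) → ℝ}
    (hu : ∀ j, u j ∈ Set.Icc (0:ℝ) 1) (hu' : ∀ j, u' j ∈ Set.Icc (0:ℝ) 1)
    (hle : ∀ j, u j ≤ u' j)
    (hf : ∀ η η', leConf η η' → f η ≤ f η') :
    Pfun u f ≤ Pfun u' f := by
  have key : ∀ s : Finset ι, Pfun u f ≤ Pfun (s.piecewise u' u) f := by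
    intro s
    induction s using Finset.induction_on with
    | empty => rw [Finset.piecewise_empty]
    | @insert a s ha ih =>
      rw [Finset.piecewise_insert]
      refine ih.trans (Pfun_update_le_of_mono (piecewise_mem hu hu' s) ?_ hf)
      rw [Finset.piecewise_eq_of_notMem _ _ _ ha]
      exact hle a
  have h := key Finset.univ
  rwa [Finset.piecewise_univ] at h

lemma Pfun_anti {u u' : ι → ℝ} {f : (ι → Bool) → ℝ}
    (hu : ∀ j, u j ∈ Set.Icc (0:ℝ) 1) (hu' : ∀ j, u' j ∈ Set.Icc (0:ℝ) 1)
    (hle : ∀ j, u j ≤ u' j)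
    (hf : ∀ η η', leConf η η' → f η' ≤ f η) :
    Pfun u' f ≤ Pfun u f := by
  have key : ∀ s : Finset ι, Pfun (s.piecewise u' u) f ≤ Pfun u f := by
    intro s
    induction s using Finset.induction_on with
    | empty => rw [Finset.piecewise_empty]
    | @insert a s ha ih =>
      rw [Finset.piecewise_insert]
      refine le_trans (Pfun_update_le_of_anti (piecewise_mem hu hu' s) ?_ hf) ih
      rw [Finset.piecewise_eq_of_notMem _ _ _ ha]
      exact hle a
  have h := key Finset.univ
  rwa [Finset.piecewise_univ] at h

lemma Pfun_lip {u u' : ι → ℝ} {f : (ι → Bool) → ℝ}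
    (hu : ∀ j, u j ∈ Set.Icc (0:ℝ) 1) (hu' : ∀ j, u' j ∈ Set.Icc (0:ℝ) 1)
    (hf0 : ∀ η, 0 ≤ f η) (hf1 : ∀ η, f η ≤ 1) :
    |Pfun u' f - Pfun u f| ≤ ∑ j, |u' j - u j| := by
  have key : ∀ s : Finset ι,
      |Pfun (s.piecewise u' u) f - Pfun u f| ≤ ∑ j ∈ s, |u' j - u j| := by
    intro s
    induction s using Finset.induction_on with
    | empty => rw [Finset.piecewise_empty]; simp
    | @insert a s ha ih =>
      rw [Finset.piecewise_insert, Finset.sum_insert ha]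
      have h1 := Pfun_update_lip (i := a) (x := u' a)
        (piecewise_mem hu hu' s) hf0 hf1
      rw [Finset.piecewise_eq_of_notMem _ _ _ ha] at h1
      calc |Pfun (Function.update (s.piecewise u' u) a (u' a)) f - Pfun u f|
          ≤ |Pfun (Function.update (s.piecewise u' u) a (u' a)) f
              - Pfun (s.piecewise u' u) f| + |Pfun (s.piecewise u' u) f - Pfun u f| := by
            exact abs_sub_le _ _ _
        _ ≤ |u' a - u a| + ∑ j ∈ s, |u' j - u j| := add_le_add h1 ih
  have h := key Finset.univ
  rwa [Finset.piecewise_univ] at h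

end CompAux

section Torus
open CompAux
variable {d N : ℕ} [NeZero N] (V : Finset (Site d N)) (T : ℝ)

lemma bprob_eq (u : Site d N → ℝ) (A : Set (Conf d N)) :
    bprob d N u A = Pfun u (A.indicator fun _ => (1:ℝ)) := by
  simp only [bprob, dif_neg (NeZero.ne N)]
  rfl

lemma ind_nonneg (A : Set (Conf d N)) (η : Conf d N) :
    0 ≤ A.indicator (fun _ => (1:ℝ)) η :=
  Set.indicator_nonneg (fun _ _ => zero_le_one) η

lemma ind_le_one (A : Set (Conf d N)) (η : Conf d N) :
    A.indicator (fun _ => (1:ℝ)) η ≤ 1 := by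
  classical
  rw [Set.indicator_apply]
  split <;> norm_num

lemma rho_mono {η η' : Conf d N} (h : leConf η η') (i : Site d N) :
    rho d N V η i ≤ rho d N V η' i := by
  unfold rho
  rw [div_eq_mul_inv, div_eq_mul_inv]
  refine mul_le_mul_of_nonneg_right ?_ (inv_nonneg.mpr (Nat.cast_nonneg _))
  refine Finset.sum_le_sum fun j _ => ?_
  by_cases hb : η (i + j) = true
  · simp [hb, h _ hb]
  · simp only [Bool.not_eq_true] at hb
    simp only [hb, Bool.false_eq_true, if_false]
    split <;> norm_num

lemma indPlus_mono (c : ℝ) :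
    ∀ η η' : Conf d N, leConf η η' →
      Set.indicator {η : Conf d N | rho d N V η 0 ≥ c} (fun _ => (1:ℝ)) η
        ≤ Set.indicator {η : Conf d N | rho d N V η 0 ≥ c} (fun _ => (1:ℝ)) η' := by
  intro η η' h
  by_cases hη : η ∈ {η : Conf d N | rho d N V η 0 ≥ c}
  · have hη' : η' ∈ {η : Conf d N | rho d N V η 0 ≥ c} :=
      le_trans hη (rho_mono V h 0)
    rw [Set.indicator_of_mem hη, Set.indicator_of_mem hη']
  · rw [Set.indicator_of_notMem hη]
    exact ind_nonneg _ _

lemma indMinus_anti (c : ℝ) :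
    ∀ η η' : Conf d N, leConf η η' →
      Set.indicator {η : Conf d N | rho d N V η 0 ≤ c} (fun _ => (1:ℝ)) η'
        ≤ Set.indicator {η : Conf d N | rho d N V η 0 ≤ c} (fun _ => (1:ℝ)) η := by
  intro η η' h
  by_cases hη' : η' ∈ {η : Conf d N | rho d N V η 0 ≤ c}
  · have hη : η ∈ {η : Conf d N | rho d N V η 0 ≤ c} :=
      le_trans (rho_mono V h 0) hη'
    rw [Set.indicator_of_mem hη, Set.indicator_of_mem hη']
  · rw [Set.indicator_of_notMem hη']
    exact ind_nonneg _ _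

lemma cplus_eq (u : Site d N → ℝ) :
    cplus d N V T u = Pfun u (Set.indicator
      {η : Conf d N | rho d N V η 0 ≥ 1 - (kappaN V.card T : ℝ) / (V.card : ℝ)}
      (fun _ => (1:ℝ))) := bprob_eq _ _

lemma cminus_eq (u : Site d N → ℝ) :
    cminus d N V T u = Pfun u (Set.indicator
      {η : Conf d N | rho d N V η 0 ≤ (kappaN V.card T : ℝ) / (V.card : ℝ)}
      (fun _ => (1:ℝ))) := bprob_eq _ _

lemma cplus_mem {u : Site d N → ℝ} (hu : ∀ j, u j ∈ Set.Icc (0:ℝ) 1) :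
    cplus d N V T u ∈ Set.Icc (0:ℝ) 1 := by
  rw [cplus_eq]
  exact ⟨Pfun_nonneg hu (ind_nonneg _), Pfun_le_one hu (ind_le_one _)⟩

lemma cminus_mem {u : Site d N → ℝ} (hu : ∀ j, u j ∈ Set.Icc (0:ℝ) 1) :
    cminus d N V T u ∈ Set.Icc (0:ℝ) 1 := by
  rw [cminus_eq]
  exact ⟨Pfun_nonneg hu (ind_nonneg _), Pfun_le_one hu (ind_le_one _)⟩

lemma cplus_mono {u u' : Site d N → ℝ} (hu : ∀ j, u j ∈ Set.Icc (0:ℝ) 1)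
    (hu' : ∀ j, u' j ∈ Set.Icc (0:ℝ) 1) (hle : ∀ j, u j ≤ u' j) :
    cplus d N V T u ≤ cplus d N V T u' := by
  rw [cplus_eq, cplus_eq]
  exact Pfun_mono hu hu' hle (indPlus_mono V _)

lemma cminus_anti {u u' : Site d N → ℝ} (hu : ∀ j, u j ∈ Set.Icc (0:ℝ) 1)
    (hu' : ∀ j, u' j ∈ Set.Icc (0:ℝ) 1) (hle : ∀ j, u j ≤ u' j) :
    cminus d N V T u' ≤ cminus d N V T u := by
  rw [cminus_eq, cminus_eq]
  exact Pfun_anti hu hu' hle (indMinus_anti V _)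

lemma cplus_lip {u u' : Site d N → ℝ} (hu : ∀ j, u j ∈ Set.Icc (0:ℝ) 1)
    (hu' : ∀ j, u' j ∈ Set.Icc (0:ℝ) 1) :
    |cplus d N V T u' - cplus d N V T u| ≤ ∑ j, |u' j - u j| := by
  rw [cplus_eq, cplus_eq]
  exact Pfun_lip hu hu' (ind_nonneg _) (ind_le_one _)

lemma cminus_lip {u u' : Site d N → ℝ} (hu : ∀ j, u j ∈ Set.Icc (0:ℝ) 1)
    (hu' : ∀ j, u' j ∈ Set.Icc (0:ℝ) 1) :
    |cminus d N V T u' - cminus d N V T u| ≤ ∑ j, |u' j - u j| := by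
  rw [cminus_eq, cminus_eq]
  exact Pfun_lip hu hu' (ind_nonneg _) (ind_le_one _)

lemma Gfun_comp (u v : Site d N → ℝ)
    (hu : ∀ j, u j ∈ Set.Icc (0:ℝ) 1) (hv : ∀ j, v j ∈ Set.Icc (0:ℝ) 1)
    (m : ℝ) (hm : 0 ≤ m) (hle : ∀ j, v j ≤ u j + m) (heq : v 0 = u 0 + m) :
    Gfun d N V T v - Gfun d N V T u ≤ (2 * (Fintype.card (Site d N) : ℝ)) * m := by
  classical
  set w : Site d N → ℝ := fun j => min 1 (u j + m) with hwdef
  have hwIcc : ∀ j, w j ∈ Set.Icc (0:ℝ) 1 := fun j =>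
    ⟨le_min zero_le_one (add_nonneg (hu j).1 hm), min_le_left _ _⟩
  have hvw : ∀ j, v j ≤ w j := fun j => le_min (hv j).2 (hle j)
  have hwu : ∀ j, |w j - u j| ≤ m := by
    intro j
    rw [abs_le]
    constructor
    · have h1 : u j ≤ w j := le_min (hu j).2 (by linarith [hm])
      linarith
    · have : w j ≤ u j + m := min_le_right _ _
      linarith
  have hsum : ∑ j, |w j - u j| ≤ (Fintype.card (Site d N) : ℝ) * m := by
    calc ∑ j, |w j - u j| ≤ ∑ _j : Site d N, m := Finset.sum_le_sum fun j _ => hwu j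
      _ = (Fintype.card (Site d N) : ℝ) * m := by
          rw [Finset.sum_const, Finset.card_univ, nsmul_eq_mul]
  set S' := (Fintype.card (Site d N) : ℝ) * m with hS'
  have hS'0 : 0 ≤ S' := mul_nonneg (Nat.cast_nonneg _) hm
  have hp1 : cplus d N V T v ≤ cplus d N V T w := cplus_mono V T hv hwIcc hvw
  have hp2 : cplus d N V T w ≤ cplus d N V T u + S' := by
    have := cplus_lip V T hu hwIcc
    have h := abs_le.mp this
    linarith [hsum, h.2]
  have hq1 : cminus d N V T w ≤ cminus d N V T v := cminus_anti V T hv hwIcc hvw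
  have hq2 : cminus d N V T u - S' ≤ cminus d N V T w := by
    have := cminus_lip V T hu hwIcc
    have h := abs_le.mp this
    linarith [hsum, h.1]
  have hau := cplus_mem V T hu
  have hbu := cminus_mem V T hu
  have hav := cplus_mem V T hv
  have hbv := cminus_mem V T hv
  have hv0 := hv 0
  have hu0 := hu 0
  unfold Gfun
  set a := cplus d N V T u
  set b := cminus d N V T u
  set p := cplus d N V T v
  set q := cminus d N V T v
  have hple : p ≤ a + S' := le_trans hp1 hp2
  have hqge : b - S' ≤ q := le_trans hq2 hq1
  have h1 : (1 - v 0) * p ≤ (1 - v 0) * (a + S') :=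
    mul_le_mul_of_nonneg_left hple (by linarith [hv0.2])
  have h2 : (v 0) * (b - S') ≤ (v 0) * q :=
    mul_le_mul_of_nonneg_left hqge hv0.1
  have hma : 0 ≤ m * a := mul_nonneg hm hau.1
  have hmb : 0 ≤ m * b := mul_nonneg hm hbu.1
  rw [heq] at h1 h2 ⊢
  nlinarith [h1, h2, hma, hmb, hS'0]

lemma Gi_comp (i : Site d N) (u v : Site d N → ℝ)
    (hu : ∀ j, u j ∈ Set.Icc (0:ℝ) 1) (hv : ∀ j, v j ∈ Set.Icc (0:ℝ) 1)
    (m : ℝ) (hm : 0 ≤ m) (hle : ∀ j, v j ≤ u j + m) (heqi : v i = u i + m) :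
    Gi d N V T i v - Gi d N V T i u ≤ (2 * (Fintype.card (Site d N) : ℝ)) * m := by
  have := Gfun_comp V T (fun j => u (i + j)) (fun j => v (i + j))
    (fun j => hu (i + j)) (fun j => hv (i + j)) m hm (fun j => hle (i + j))
    (by simpa [add_zero] using heqi)
  exact this

lemma discLap_sub_nonpos {u v : Site d N → ℝ} {i : Site d N} {m : ℝ}
    (hle : ∀ j, v j - u j ≤ m) (heq : v i - u i = m) :
    discLap d N v i - discLap d N u i ≤ 0 := by
  unfold discLap
  rw [← Finset.sum_sub_distrib]
  refine Finset.sum_nonpos fun k _ => ?_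
  have h1 := hle (i + unitVec d N k)
  have h2 := hle (i - unitVec d N k)
  linarith

end Torus

/-- comparison principle for the discrete reaction–diffusion system:
a supersolution `u` staying above a subsolution `v` at time `0` stays above it forever. -/
theorem stmt0
    (d N : ℕ) (hd : 1 ≤ d) (hN : 1 ≤ N)
    (V : Finset (Site d N)) (hV0 : (0 : Site d N) ∉ V)
    (T : ℝ) (hT : T ∈ Set.Icc (0 : ℝ) 1)
    (α β : ℝ) (hα : 0 < α) (hβ : 0 < β)
    (u v : ℝ → Site d N → ℝ)
    (hu01 : ∀ t, 0 ≤ t → ∀ i, u t i ∈ Set.Icc (0 : ℝ) 1)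
    (hv01 : ∀ t, 0 ≤ t → ∀ i, v t i ∈ Set.Icc (0 : ℝ) 1)
    (u' v' : ℝ → Site d N → ℝ)
    (hu : ∀ i, ∀ t, 0 ≤ t → HasDerivAt (fun s => u s i) (u' t i) t)
    (hv : ∀ i, ∀ t, 0 ≤ t → HasDerivAt (fun s => v s i) (v' t i) t)
    (hsuper : ∀ t, 0 ≤ t → ∀ i,
      u' t i ≥ 2 * α * (N : ℝ) ^ 2 * discLap d N (u t) i
        + β * (1 - 2 * u t i) + Gi d N V T i (u t))
    (hsub : ∀ t, 0 ≤ t → ∀ i,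
      v' t i ≤ 2 * α * (N : ℝ) ^ 2 * discLap d N (v t) i
        + β * (1 - 2 * v t i) + Gi d N V T i (v t))
    (h0 : ∀ i, v 0 i ≤ u 0 i) :
    ∀ t, 0 ≤ t → ∀ i, v t i ≤ u t i := by
  haveI : NeZero N := ⟨Nat.one_le_iff_ne_zero.mp hN⟩
  set S : ℝ := (Fintype.card (Site d N) : ℝ) with hSdef
  set C : ℝ := 2 * S + 1 with hCdef
  have hS0 : 0 ≤ S := Nat.cast_nonneg _
  have main : ∀ ε : ℝ, 0 < ε → ∀ t, 0 ≤ t → ∀ i,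
      v t i - u t i < ε * Real.exp (C * t) := by
    intro ε hε
    by_contra hcon
    push_neg at hcon
    obtain ⟨t₁, ht₁, i₁, hi₁⟩ := hcon
    set A : Set ℝ := {t | 0 ≤ t ∧ ∃ i, ε * Real.exp (C * t) ≤ v t i - u t i} with hA
    have hAne : A.Nonempty := ⟨t₁, ht₁, i₁, hi₁⟩
    have hAbdd : BddBelow A := ⟨0, fun t ht => ht.1⟩
    have hcontg : ∀ i : Site d N, ∀ p : ℝ, 0 ≤ p →
        ContinuousAt (fun t => v t i - u t i - ε * Real.exp (C * t)) p := by
      intro i p hp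
      have h1 := (hv i p hp).continuousAt
      have h2 := (hu i p hp).continuousAt
      have h3 : ContinuousAt (fun t : ℝ => ε * Real.exp (C * t)) p := by fun_prop
      exact (h1.sub h2).sub h3
    have hclosed : IsClosed A := by
      have hrw : A = ⋃ i : Site d N,
          {t | 0 ≤ t ∧ ε * Real.exp (C * t) ≤ v t i - u t i} := by
        ext t
        simp only [hA, Set.mem_setOf_eq, Set.mem_iUnion]
        tauto
      rw [hrw]
      refine isClosed_iUnion_of_finite fun i => ?_
      refine IsSeqClosed.isClosed ?_
      intro x p hx hxp
      have hp0 : 0 ≤ p := ge_of_tendsto hxp (Filter.Eventually.of_forall fun n => (hx n).1)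
      refine ⟨hp0, ?_⟩
      have htend : Filter.Tendsto (fun n => v (x n) i - u (x n) i - ε * Real.exp (C * x n))
          Filter.atTop (nhds (v p i - u p i - ε * Real.exp (C * p))) :=
        (hcontg i p hp0).tendsto.comp hxp
      have hge : (0:ℝ) ≤ v p i - u p i - ε * Real.exp (C * p) :=
        ge_of_tendsto htend (Filter.Eventually.of_forall fun n => by
          have := (hx n).2; linarith)
      linarith
    set t₀ := sInf A with ht₀def
    have ht₀A : t₀ ∈ A := hclosed.csInf_mem hAne hAbdd
    have ht₀0 : 0 ≤ t₀ := ht₀A.1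
    obtain ⟨-, i, hi⟩ := ht₀A
    have ht₀pos : 0 < t₀ := by
      rcases lt_or_eq_of_le ht₀0 with h | h
      · exact h
      · exfalso
        rw [← h] at hi
        rw [mul_zero, Real.exp_zero, mul_one] at hi
        have := h0 i
        linarith
    have hbefore : ∀ t, 0 ≤ t → t < t₀ → ∀ j,
        v t j - u t j < ε * Real.exp (C * t) := by
      intro t ht htlt j
      by_contra hcontra
      push_neg at hcontra
      exact (notMem_of_lt_csInf htlt hAbdd) ⟨ht, j, hcontra⟩
    have hallle : ∀ j, v t₀ j - u t₀ j ≤ ε * Real.exp (C * t₀) := by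
      intro j
      have hev : ∀ᶠ t in nhdsWithin t₀ (Set.Iio t₀),
          v t j - u t j - ε * Real.exp (C * t) ≤ 0 := by
        filter_upwards [Ioo_mem_nhdsLT_of_mem
          (show t₀ ∈ Set.Ioc (0:ℝ) t₀ from ⟨ht₀pos, le_refl t₀⟩)] with t ht
        have := hbefore t ht.1.le ht.2 j
        linarith
      have htend : Filter.Tendsto (fun t => v t j - u t j - ε * Real.exp (C * t))
          (nhdsWithin t₀ (Set.Iio t₀)) (nhds (v t₀ j - u t₀ j - ε * Real.exp (C * t₀))) :=
        ((hcontg j t₀ ht₀0).tendsto).mono_left nhdsWithin_le_nhds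
      have := le_of_tendsto htend hev
      linarith
    have heq : v t₀ i - u t₀ i = ε * Real.exp (C * t₀) := le_antisymm (hallle i) hi
    set m := ε * Real.exp (C * t₀) with hmdef
    have hmpos : 0 < m := mul_pos hε (Real.exp_pos _)
    have hz : HasDerivAt (fun t => v t i - u t i - ε * Real.exp (C * t))
        (v' t₀ i - u' t₀ i - ε * (Real.exp (C * t₀) * C)) t₀ := by
      have h1 : HasDerivAt (fun t : ℝ => C * t) (C * 1) t₀ := (hasDerivAt_id t₀).const_mul C
      have h2 := (Real.hasDerivAt_exp (C * t₀)).comp t₀ h1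
      have he : HasDerivAt (fun t : ℝ => ε * Real.exp (C * t))
          (ε * (Real.exp (C * t₀) * C)) t₀ := by
        have h3 := h2.const_mul ε
        rw [mul_one] at h3
        exact h3
      exact ((hv i t₀ ht₀0).sub (hu i t₀ ht₀0)).sub he
    have hz' : 0 ≤ v' t₀ i - u' t₀ i - ε * (Real.exp (C * t₀) * C) := by
      have hslope := hasDerivAt_iff_tendsto_slope.mp hz
      have hmono : nhdsWithin t₀ (Set.Iio t₀) ≤ nhdsWithin t₀ {t₀}ᶜ :=
        nhdsWithin_mono _ fun x hx => ne_of_lt hx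
      refine ge_of_tendsto (hslope.mono_left hmono) ?_
      filter_upwards [Ioo_mem_nhdsLT_of_mem
        (show t₀ ∈ Set.Ioc (0:ℝ) t₀ from ⟨ht₀pos, le_refl t₀⟩)] with t ht
      have hzt : v t i - u t i - ε * Real.exp (C * t) ≤ 0 := by
        have := hbefore t ht.1.le ht.2 i
        linarith
      rw [slope_def_field]
      apply div_nonneg_of_nonpos
      · linarith [heq, hzt]
      · linarith [ht.2]
    have hlap : discLap d N (v t₀) i - discLap d N (u t₀) i ≤ 0 :=
      discLap_sub_nonpos (m := m) (fun j => by linarith [hallle j]) (by linarith [heq])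
    have hG : Gi d N V T i (v t₀) - Gi d N V T i (u t₀) ≤ 2 * S * m := by
      have := Gi_comp V T i (u t₀) (v t₀) (hu01 t₀ ht₀0) (hv01 t₀ ht₀0) m hmpos.le
        (fun j => by linarith [hallle j]) (by linarith [heq])
      calc Gi d N V T i (v t₀) - Gi d N V T i (u t₀)
          ≤ (2 * (Fintype.card (Site d N) : ℝ)) * m := this
        _ = 2 * S * m := by rw [hSdef]
    have h1 := hsub t₀ ht₀0 i
    have h2 := hsuper t₀ ht₀0 i
    have hN2 : (0:ℝ) ≤ 2 * α * (N : ℝ) ^ 2 := by positivity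
    have hlap2 : 2 * α * (N : ℝ) ^ 2 * discLap d N (v t₀) i
        ≤ 2 * α * (N : ℝ) ^ 2 * discLap d N (u t₀) i := by
      nlinarith [hlap, hN2]
    have hdiff : v' t₀ i - u' t₀ i ≤ -2 * β * m + 2 * S * m := by
      have hvu : v t₀ i - u t₀ i = m := heq
      have : β * (1 - 2 * v t₀ i) - β * (1 - 2 * u t₀ i) = -2 * β * m := by
        rw [show v t₀ i = u t₀ i + m by linarith]
        ring
      linarith [h1, h2, hlap2, hG, this]
    have hCm : ε * (Real.exp (C * t₀) * C) = C * m := by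
      rw [hmdef]; ring
    rw [hCm] at hz'
    have : C * m = 2 * S * m + m := by rw [hCdef]; ring
    nlinarith [hz', hdiff, hmpos, hβ]
  intro t ht i
  by_contra hcontra
  push_neg at hcontra
  have hE := Real.exp_pos (C * t)
  have hδ : 0 < v t i - u t i := by linarith
  have hkey := main ((v t i - u t i) / (2 * Real.exp (C * t))) (by positivity) t ht i
  have heval : (v t i - u t i) / (2 * Real.exp (C * t)) * Real.exp (C * t)
      = (v t i - u t i) / 2 := by
    field_simp
  rw [heval] at hkey
  linarith

end
end

section
/- Non-uniqueness of mild solutions for constant initial data: fix α > 0, β > 0 and ρ ∈ (0, 1/2] with 2ρ < 1/(1+2β), and let v_0(x) = 2ρ for all x ∈ T^d. Then the three functions v¹(t,x) = 2ρ e^{−2βt}, v²(t,x) = 2ρ + (1/(1+2β) − 2ρ)(1 − e^{−(2β+1)t}), and v³(t,x) = 2ρ are pairwise distinct mild solutions (on every [0,τ]) of the subdifferential inclusion ∂_t v − 2αΔv + (2β+1)v ∈ ∂H_∞(v) with initial datum v_0; for v¹ and v² the selection is w = h_∞(v) where h_∞(q) = −1{q ≤ −2ρ} + q·1{−2ρ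 < q ≤ 2ρ} + 1{q > 2ρ}, and for v³ the selection is the constant w = 2ρ(2β+1) ∈ ∂H_∞(2ρ). In particular the subdifferential inclusion admits at least three mild solutions with this initial datum. -/
open MeasureTheory
open scoped BigOperators

noncomputable section

/-- Euclidean space `ℝ^d`; functions on the torus `T^d = (ℝ/ℤ)^d` are modelled as
`ℤ^d`-periodic functions on `ℝ^d`. -/
abbrev Rd (d : ℕ) := EuclideanSpace ℝ (Fin d)

/-- `f` is `ℤ^d`-periodic, i.e. is (the periodic extension of) a function on the torus. -/
def PerZd {d : ℕ} (f : Rd d → ℝ) : Prop :=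
  ∀ (x : Rd d) (m : Fin d → ℤ), f (x + (WithLp.equiv 2 (Fin d → ℝ)).symm (fun k => (m k : ℝ))) = f x

/-- The heat kernel `s_0(t,x,y) = (2πt)^{-d/2} exp(-‖x-y‖²/(2t))` on `ℝ^d`. -/
def heatKer (d : ℕ) (t : ℝ) (x y : Rd d) : ℝ :=
  (2 * Real.pi * t) ^ (-(d : ℝ) / 2) * Real.exp (-‖x - y‖ ^ 2 / (2 * t))

/-- The semigroup `S^{λ,γ}_t f(x) = ∫_{ℝ^d} e^{-λt} s_0(γt,x,y) f̃(y) dy`. -/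
def Sg (d : ℕ) (lam gam : ℝ) (t : ℝ) (f : Rd d → ℝ) (x : Rd d) : ℝ :=
  ∫ y : Rd d, Real.exp (-lam * t) * heatKer d (gam * t) x y * f y

/-- The mild-solution map `v(t,x) = S^{λ,γ}_t v₀(x) + ∫_0^t S^{λ,γ}_{t-s}(g(s,·))(x) ds`. -/
def mild (d : ℕ) (lam gam : ℝ) (v0 : Rd d → ℝ) (g : ℝ → Rd d → ℝ) (t : ℝ) (x : Rd d) : ℝ :=
  Sg d lam gam t v0 x + ∫ s in (0 : ℝ)..t, Sg d lam gam (t - s) (g s) x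


/-- The convex potential `H_∞`. -/
def Hinf (ρ q : ℝ) : ℝ :=
  if q ≤ -(2 * ρ) then -q + 2 * ρ + 2 * ρ ^ 2
  else if q ≤ 2 * ρ then q ^ 2 / 2
  else q - 2 * ρ + 2 * ρ ^ 2

/-- The subdifferential `∂H_∞(q) = {p : H_∞(q') - H_∞(q) ≥ p(q'-q) ∀ q' ∈ [-1,1]}`. -/
def subDiffH (ρ q : ℝ) : Set ℝ :=
  {p | ∀ q' ∈ Set.Icc (-1 : ℝ) 1, Hinf ρ q' - Hinf ρ q ≥ p * (q' - q)}

/-- The measure on `[0,τ] × T^d`, the torus being realised as the fundamental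
domain `[0,1)^d ⊆ ℝ^d`. -/
def QT (d : ℕ) (τ : ℝ) : Measure (ℝ × Rd d) :=
  (volume.restrict (Set.Icc (0 : ℝ) τ)).prod
    (volume.restrict {x : Rd d | ∀ k, x k ∈ Set.Ico (0 : ℝ) 1})

/-- `v` is a mild solution on `[0,τ]` of the subdifferential inclusion
`∂_t v - 2αΔv + (2β+1)v ∈ ∂H_∞(v)` with initial datum `v₀` and selection `w`. -/
def MildWith (d : ℕ) (α β ρ τ : ℝ) (v0 : Rd d → ℝ) (v w : ℝ → Rd d → ℝ) : Prop :=
  Measurable (Function.uncurry w) ∧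
  MemLp (Function.uncurry w) 2 (QT d τ) ∧
  (∀ᵐ p ∂(QT d τ), w p.1 p.2 ∈ subDiffH ρ (v p.1 p.2)) ∧
  ∀ t, 0 < t → t ≤ τ → ∀ x,
    v t x = Sg d (2 * β + 1) (4 * α) t v0 x
      + ∫ s in (0 : ℝ)..t, Sg d (2 * β + 1) (4 * α) (t - s) (w s) x

/-- `v` is a mild solution on `[0,τ]` of the subdifferential inclusion
`∂_t v - 2αΔv + (2β+1)v ∈ ∂H_∞(v)` with initial datum `v₀`. -/
def IsMildSolIncl (d : ℕ) (α β ρ τ : ℝ) (v0 : Rd d → ℝ) (v : ℝ → Rd d → ℝ) : Prop :=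
  ∃ w : ℝ → Rd d → ℝ, MildWith d α β ρ τ v0 v w

/-- The pointwise nonlinearity `h_∞(q) = -1{q ≤ -2ρ} + q·1{-2ρ < q ≤ 2ρ} + 1{q > 2ρ}`. -/
def hinf (ρ q : ℝ) : ℝ :=
  if q ≤ -(2 * ρ) then -1 else if q ≤ 2 * ρ then q else 1


section Aux

open Real

lemma heatKer_integral {d : ℕ} (hd : 1 ≤ d) {s : ℝ} (hs : 0 < s) (x : Rd d) :
    ∫ y : Rd d, heatKer d s x y = 1 := by
  have h2s : 0 < 2 * s := by linarith
  have hb : 0 < (2 * s)⁻¹ := inv_pos.mpr h2s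
  have h1 : ∀ y : Rd d, heatKer d s x y
      = (2 * Real.pi * s) ^ (-(d : ℝ) / 2) * Real.exp (-(2 * s)⁻¹ * ‖x - y‖ ^ 2) := by
    intro y
    unfold heatKer
    congr 2
    field_simp
  simp_rw [h1]
  rw [integral_const_mul]
  have h2 : ∫ y : Rd d, Real.exp (-(2 * s)⁻¹ * ‖x - y‖ ^ 2)
      = ∫ y : Rd d, Real.exp (-(2 * s)⁻¹ * ‖y‖ ^ 2) :=
    integral_sub_left_eq_self (fun z : Rd d => Real.exp (-(2 * s)⁻¹ * ‖z‖ ^ 2)) volume x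
  rw [h2, GaussianFourier.integral_rexp_neg_mul_sq_norm hb, finrank_euclideanSpace_fin]
  have hπ : 0 < 2 * Real.pi * s := by positivity
  have h3 : Real.pi / (2 * s)⁻¹ = 2 * Real.pi * s := by field_simp
  rw [h3, ← Real.rpow_add hπ, show -(d:ℝ)/2 + (d:ℝ)/2 = 0 by ring, Real.rpow_zero]

lemma Sg_const {d : ℕ} (hd : 1 ≤ d) (lam gam t c : ℝ) (h : 0 < gam * t) (x : Rd d) :
    Sg d lam gam t (fun _ => c) x = Real.exp (-lam * t) * c := by
  unfold Sg
  have h1 : ∀ y : Rd d, Real.exp (-lam * t) * heatKer d (gam * t) x y * c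
      = (Real.exp (-lam * t) * c) * heatKer d (gam * t) x y := fun y => by ring
  simp_rw [h1]
  rw [integral_const_mul, heatKer_integral hd h x, mul_one]

lemma int_exp_mul (c t : ℝ) (hc : c ≠ 0) :
    ∫ s in (0:ℝ)..t, Real.exp (c * s) = (Real.exp (c * t) - 1) / c := by
  have key : ∀ s ∈ Set.uIcc (0:ℝ) t,
      HasDerivAt (fun x => Real.exp (c * x) / c) (Real.exp (c * s)) s := by
    intro s _
    have h1 : HasDerivAt (fun x : ℝ => c * x) c s := by
      simpa using (hasDerivAt_id s).const_mul c
    have h2 := (Real.hasDerivAt_exp (c * s)).comp s h1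
    have h3 := h2.div_const c
    simpa [mul_comm, mul_div_assoc, mul_div_cancel_left₀ _ hc] using h3
  have hcont : IntervalIntegrable (fun s => Real.exp (c * s)) volume 0 t :=
    (Real.continuous_exp.comp (continuous_const.mul continuous_id)).intervalIntegrable 0 t
  rw [intervalIntegral.integral_eq_sub_of_hasDerivAt key hcont]
  simp [Real.exp_zero]
  ring

lemma hinf_mem_subDiff {ρ q : ℝ} (hρ0 : 0 < ρ) (hρ1 : ρ ≤ 1 / 2) (hq : -(2 * ρ) < q) :
    hinf ρ q ∈ subDiffH ρ q := by
  simp only [subDiffH, Set.mem_setOf_eq]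
  intro q' hq'
  obtain ⟨h1, h2⟩ := hq'
  unfold Hinf hinf
  split_ifs <;>
    nlinarith [sq_nonneg (q - q'), sq_nonneg (q' - 2 * ρ), sq_nonneg (q' + 2 * ρ),
      sq_nonneg (q - 2 * ρ), sq_nonneg (q + 2 * ρ)]

lemma measurable_hinf (ρ : ℝ) : Measurable (hinf ρ) := by
  unfold hinf
  exact Measurable.ite (measurableSet_le measurable_id measurable_const) measurable_const
    (Measurable.ite (measurableSet_le measurable_id measurable_const) measurable_id
      measurable_const)

lemma abs_hinf_le {ρ : ℝ} (hρ0 : 0 < ρ) (hρ1 : ρ ≤ 1 / 2) (q : ℝ) : |hinf ρ q| ≤ 1 := by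
  unfold hinf
  split_ifs <;> rw [abs_le] <;> constructor <;> linarith

lemma QT_finite (d : ℕ) (τ : ℝ) : IsFiniteMeasure (QT d τ) := by
  unfold QT
  have h1 : IsFiniteMeasure (volume.restrict (Set.Icc (0:ℝ) τ)) :=
    ⟨by rw [Measure.restrict_apply_univ]; exact measure_Icc_lt_top⟩
  have h2 : IsFiniteMeasure
      (volume.restrict {x : Rd d | ∀ k, x k ∈ Set.Ico (0 : ℝ) 1}) := by
    constructor
    rw [Measure.restrict_apply_univ]
    refine lt_of_le_of_lt (measure_mono ?_)
      (measure_closedBall_lt_top (x := (0 : Rd d)) (r := Real.sqrt d))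
    intro x hx
    simp only [Metric.mem_closedBall, dist_zero_right]
    rw [EuclideanSpace.norm_eq]
    have hsum : ∑ i, ‖x i‖ ^ 2 ≤ (d : ℝ) := by
      calc ∑ i, ‖x i‖ ^ 2 ≤ ∑ _i : Fin d, (1 : ℝ) := by
            refine Finset.sum_le_sum fun i _ => ?_
            have h := hx i
            have h0 : (0:ℝ) ≤ x i := h.1
            have h1 : x i < 1 := h.2
            rw [Real.norm_eq_abs, abs_of_nonneg h0]
            nlinarith
        _ = (d : ℝ) := by simp
    exact Real.sqrt_le_sqrt hsum
  exact @MeasureTheory.Measure.prod.instIsFiniteMeasure _ _ _ _ _ _ h1 h2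

lemma QT_ae_fst (d : ℕ) (τ : ℝ) : ∀ᵐ p ∂(QT d τ), p.1 ∈ Set.Icc (0:ℝ) τ := by
  unfold QT
  rw [MeasureTheory.ae_iff]
  have h : {p : ℝ × Rd d | ¬ p.1 ∈ Set.Icc (0:ℝ) τ} = (Set.Icc (0:ℝ) τ)ᶜ ×ˢ Set.univ := by
    ext p; simp
  rw [h, Measure.prod_prod, Measure.restrict_apply measurableSet_Icc.compl]
  simp

lemma ae_ne_vol (t : ℝ) : ∀ᵐ s : ℝ, s ≠ t := by
  rw [MeasureTheory.ae_iff]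
  simp only [ne_eq, not_not, Set.setOf_eq_eq_singleton]
  exact measure_singleton t

end Aux

set_option maxHeartbeats 1000000 in
/-- non-uniqueness of mild solutions of the subdifferential inclusion
for the constant initial datum `v₀ ≡ 2ρ` when `2ρ < 1/(1+2β)`: the three explicit
functions `v¹, v², v³` are pairwise distinct mild solutions (on every `[0,τ]`),
with the indicated selections. -/

theorem stmt7
    (d : ℕ) (hd : 1 ≤ d) (α β ρ : ℝ) (hα : 0 < α) (hβ : 0 < β)
    (hρ : ρ ∈ Set.Ioc (0 : ℝ) (1 / 2)) (hsmall : 2 * ρ < 1 / (1 + 2 * β))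
    (v0 : Rd d → ℝ) (v1 v2 v3 : ℝ → Rd d → ℝ)
    (hv0 : v0 = fun _ => 2 * ρ)
    (hv1 : v1 = fun t _ => 2 * ρ * Real.exp (-(2 * β) * t))
    (hv2 : v2 = fun t _ => 2 * ρ + (1 / (1 + 2 * β) - 2 * ρ) * (1 - Real.exp (-(2 * β + 1) * t)))
    (hv3 : v3 = fun _ _ => 2 * ρ) :
    (∀ τ, 0 < τ →
      MildWith d α β ρ τ v0 v1 (fun t x => hinf ρ (v1 t x))) ∧
    (∀ τ, 0 < τ →
      MildWith d α β ρ τ v0 v2 (fun t x => hinf ρ (v2 t x))) ∧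
    (∀ τ, 0 < τ →
      MildWith d α β ρ τ v0 v3 (fun _ _ => 2 * ρ * (2 * β + 1))) ∧
    (2 * ρ * (2 * β + 1) ∈ subDiffH ρ (2 * ρ)) ∧
    v1 ≠ v2 ∧ v1 ≠ v3 ∧ v2 ≠ v3 := by
  obtain ⟨hρ0, hρ1⟩ := hρ
  subst hv0 hv1 hv2 hv3
  have hβ1 : (0:ℝ) < 2 * β + 1 := by linarith
  have hlam : (2 * β + 1 : ℝ) ≠ 0 := ne_of_gt hβ1
  have h0 : (0:ℝ) < 1 + 2 * β := by linarith
  have hp1 : 2 * ρ * (2 * β + 1) < 1 := by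
    rw [lt_div_iff₀ h0] at hsmall
    nlinarith
  have hcρ : 0 < 1 / (1 + 2 * β) - 2 * ρ := by linarith
  refine ⟨?_, ?_, ?_, ?_, ?_, ?_, ?_⟩
  · -- v1 is a mild solution
    intro τ hτ
    haveI := QT_finite d τ
    refine ⟨?_, ?_, ?_, ?_⟩
    · have hm : Measurable fun p : ℝ × Rd d => 2 * ρ * Real.exp (-(2 * β) * p.1) :=
        measurable_const.mul (Real.measurable_exp.comp (measurable_fst.const_mul (-(2 * β))))
      exact (measurable_hinf ρ).comp hm
    · refine MemLp.of_bound ?_ 1 (Filter.Eventually.of_forall fun p => ?_)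
      · have hm : Measurable fun p : ℝ × Rd d => 2 * ρ * Real.exp (-(2 * β) * p.1) :=
          measurable_const.mul (Real.measurable_exp.comp (measurable_fst.const_mul (-(2 * β))))
        exact ((measurable_hinf ρ).comp hm).aestronglyMeasurable
      · simpa [Real.norm_eq_abs, Function.uncurry] using abs_hinf_le hρ0 hρ1 _
    · refine Filter.Eventually.of_forall fun p => ?_
      beta_reduce
      refine hinf_mem_subDiff hρ0 hρ1 ?_
      nlinarith [Real.exp_pos (-(2 * β) * p.1)]
    · intro t ht htτ x
      beta_reduce
      rw [Sg_const hd _ _ _ _ (by positivity : (0:ℝ) < 4 * α * t) x]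
      have hint : (∫ s in (0:ℝ)..t,
            Sg d (2 * β + 1) (4 * α) (t - s)
              (fun _ => hinf ρ (2 * ρ * Real.exp (-(2 * β) * s))) x)
          = ∫ s in (0:ℝ)..t, (2 * ρ * Real.exp (-(2 * β + 1) * t)) * Real.exp s := by
        apply intervalIntegral.integral_congr_ae
        filter_upwards [ae_ne_vol t] with s hs hmem
        rw [Set.uIoc_of_le ht.le] at hmem
        obtain ⟨hs0, hst⟩ := hmem
        have hst' : s < t := lt_of_le_of_ne hst hs
        have hpos : (0:ℝ) < 4 * α * (t - s) := by
          have := sub_pos.mpr hst'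
          positivity
        rw [Sg_const hd _ _ _ _ hpos x]
        have he1 : Real.exp (-(2 * β) * s) ≤ 1 := Real.exp_le_one_iff.mpr (by nlinarith)
        have hle : 2 * ρ * Real.exp (-(2 * β) * s) ≤ 2 * ρ := by nlinarith
        have hgt : -(2 * ρ) < 2 * ρ * Real.exp (-(2 * β) * s) := by
          nlinarith [Real.exp_pos (-(2 * β) * s)]
        unfold hinf
        rw [if_neg (by linarith), if_pos hle]
        rw [show Real.exp (-(2 * β + 1) * (t - s)) * (2 * ρ * Real.exp (-(2 * β) * s))
            = 2 * ρ * Real.exp (-(2 * β + 1) * (t - s) + -(2 * β) * s) by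
          rw [Real.exp_add]; ring]
        rw [show -(2 * β + 1) * (t - s) + -(2 * β) * s = -(2 * β + 1) * t + s by ring,
          Real.exp_add]
        ring
      rw [hint, intervalIntegral.integral_const_mul, integral_exp]
      rw [show Real.exp (-(2 * β) * t) = Real.exp (-(2 * β + 1) * t) * Real.exp t by
        rw [← Real.exp_add]; congr 1; ring]
      rw [Real.exp_zero]
      ring
  · -- v2 is a mild solution
    intro τ hτ
    haveI := QT_finite d τ
    have hm2 : Measurable fun p : ℝ × Rd d =>
        2 * ρ + (1 / (1 + 2 * β) - 2 * ρ) * (1 - Real.exp (-(2 * β + 1) * p.1)) :=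
      measurable_const.add (measurable_const.mul (measurable_const.sub
        (Real.measurable_exp.comp (measurable_fst.const_mul (-(2 * β + 1))))))
    refine ⟨(measurable_hinf ρ).comp hm2, ?_, ?_, ?_⟩
    · refine MemLp.of_bound ((measurable_hinf ρ).comp hm2).aestronglyMeasurable 1
        (Filter.Eventually.of_forall fun p => ?_)
      simpa [Real.norm_eq_abs, Function.uncurry] using abs_hinf_le hρ0 hρ1 _
    · filter_upwards [QT_ae_fst d τ] with p hp
      beta_reduce
      refine hinf_mem_subDiff hρ0 hρ1 ?_
      have hE : Real.exp (-(2 * β + 1) * p.1) ≤ 1 :=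
        Real.exp_le_one_iff.mpr (by nlinarith [hp.1])
      nlinarith
    · intro t ht htτ x
      beta_reduce
      rw [Sg_const hd _ _ _ _ (by positivity : (0:ℝ) < 4 * α * t) x]
      have hint : (∫ s in (0:ℝ)..t,
            Sg d (2 * β + 1) (4 * α) (t - s)
              (fun _ => hinf ρ
                (2 * ρ + (1 / (1 + 2 * β) - 2 * ρ) * (1 - Real.exp (-(2 * β + 1) * s)))) x)
          = ∫ s in (0:ℝ)..t, Real.exp (-(2 * β + 1) * t) * Real.exp ((2 * β + 1) * s) := by
        apply intervalIntegral.integral_congr_ae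
        filter_upwards [ae_ne_vol t] with s hs hmem
        rw [Set.uIoc_of_le ht.le] at hmem
        obtain ⟨hs0, hst⟩ := hmem
        have hst' : s < t := lt_of_le_of_ne hst hs
        have hpos : (0:ℝ) < 4 * α * (t - s) := by
          have := sub_pos.mpr hst'
          positivity
        rw [Sg_const hd _ _ _ _ hpos x]
        have hE : Real.exp (-(2 * β + 1) * s) < 1 :=
          Real.exp_lt_one_iff.mpr (by nlinarith)
        have hv2gt : 2 * ρ
            < 2 * ρ + (1 / (1 + 2 * β) - 2 * ρ) * (1 - Real.exp (-(2 * β + 1) * s)) := by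
          nlinarith
        unfold hinf
        rw [if_neg (by linarith), if_neg (by linarith)]
        rw [mul_one, ← Real.exp_add]
        congr 1
        ring
      rw [hint, intervalIntegral.integral_const_mul, int_exp_mul _ _ hlam]
      have hE1 : Real.exp (-(2 * β + 1) * t) * Real.exp ((2 * β + 1) * t) = 1 := by
        rw [← Real.exp_add, show -(2 * β + 1) * t + (2 * β + 1) * t = 0 by ring, Real.exp_zero]
      have hne1 : (1 + 2 * β) ≠ 0 := ne_of_gt h0
      have h3 : Real.exp (-(2 * β + 1) * t) * ((Real.exp ((2 * β + 1) * t) - 1) / (2 * β + 1))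
          = (1 - Real.exp (-(2 * β + 1) * t)) / (2 * β + 1) := by
        rw [mul_div_assoc', mul_sub, mul_one, hE1]
      rw [h3]
      field_simp
      ring
  · -- v3 is a mild solution
    intro τ hτ
    haveI := QT_finite d τ
    refine ⟨measurable_const, memLp_const _, ?_, ?_⟩
    · refine Filter.Eventually.of_forall fun p => ?_
      beta_reduce
      intro q' hq'
      obtain ⟨h1, h2⟩ := hq'
      unfold Hinf
      split_ifs <;> nlinarith [sq_nonneg (q' - 2 * ρ), sq_nonneg (q' + 2 * ρ),
        mul_nonneg (mul_nonneg hρ0.le hβ.le) (sub_nonneg.mpr h2),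
        mul_pos hρ0 hβ]
    · intro t ht htτ x
      beta_reduce
      rw [Sg_const hd _ _ _ _ (by positivity : (0:ℝ) < 4 * α * t) x]
      have hint : (∫ s in (0:ℝ)..t,
            Sg d (2 * β + 1) (4 * α) (t - s) (fun _ => 2 * ρ * (2 * β + 1)) x)
          = ∫ s in (0:ℝ)..t,
              (2 * ρ * (2 * β + 1) * Real.exp (-(2 * β + 1) * t)) * Real.exp ((2 * β + 1) * s) := by
        apply intervalIntegral.integral_congr_ae
        filter_upwards [ae_ne_vol t] with s hs hmem
        rw [Set.uIoc_of_le ht.le] at hmem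
        obtain ⟨hs0, hst⟩ := hmem
        have hst' : s < t := lt_of_le_of_ne hst hs
        have hpos : (0:ℝ) < 4 * α * (t - s) := by
          have := sub_pos.mpr hst'
          positivity
        rw [Sg_const hd _ _ _ _ hpos x]
        rw [show 2 * ρ * (2 * β + 1) * Real.exp (-(2 * β + 1) * t) * Real.exp ((2 * β + 1) * s)
            = 2 * ρ * (2 * β + 1) * Real.exp (-(2 * β + 1) * t + (2 * β + 1) * s) by
          rw [Real.exp_add]; ring]
        rw [show -(2 * β + 1) * t + (2 * β + 1) * s = -(2 * β + 1) * (t - s) by ring]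
        ring
      rw [hint, intervalIntegral.integral_const_mul, int_exp_mul _ _ hlam]
      have hE1 : Real.exp (-(2 * β + 1) * t) * Real.exp ((2 * β + 1) * t) = 1 := by
        rw [← Real.exp_add, show -(2 * β + 1) * t + (2 * β + 1) * t = 0 by ring, Real.exp_zero]
      have h3 : Real.exp (-(2 * β + 1) * t) * (Real.exp ((2 * β + 1) * t) - 1)
          = 1 - Real.exp (-(2 * β + 1) * t) := by
        rw [mul_sub, mul_one, hE1]
      rw [show (2 * ρ * (2 * β + 1) * Real.exp (-(2 * β + 1) * t))
            * ((Real.exp ((2 * β + 1) * t) - 1) / (2 * β + 1))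
          = 2 * ρ * (Real.exp (-(2 * β + 1) * t) * (Real.exp ((2 * β + 1) * t) - 1))
            * ((2 * β + 1) / (2 * β + 1)) by ring,
        div_self hlam, h3]
      ring
  · -- the constant selection is in the subdifferential
    intro q' hq'
    obtain ⟨h1, h2⟩ := hq'
    unfold Hinf
    split_ifs <;> nlinarith [sq_nonneg (q' - 2 * ρ), sq_nonneg (q' + 2 * ρ),
      mul_nonneg (mul_nonneg hρ0.le hβ.le) (sub_nonneg.mpr h2),
      mul_pos hρ0 hβ]
  · -- v1 ≠ v2
    intro h
    have h1 := congrFun (congrFun h 1) 0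
    have hE1 : Real.exp (-(2 * β) * 1) < 1 := Real.exp_lt_one_iff.mpr (by nlinarith)
    have hE2 : Real.exp (-(2 * β + 1) * 1) < 1 := Real.exp_lt_one_iff.mpr (by nlinarith)
    nlinarith [Real.exp_pos (-(2 * β) * 1), Real.exp_pos (-(2 * β + 1) * 1)]
  · -- v1 ≠ v3
    intro h
    have h1 := congrFun (congrFun h 1) 0
    have hE1 : Real.exp (-(2 * β) * 1) < 1 := Real.exp_lt_one_iff.mpr (by nlinarith)
    nlinarith
  · -- v2 ≠ v3
    intro h
    have h1 := congrFun (congrFun h 1) 0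
    have hE2 : Real.exp (-(2 * β + 1) * 1) < 1 := Real.exp_lt_one_iff.mpr (by nlinarith)
    nlinarith

end
end

section
/- Quantitative convergence of g_K to g_∞: for all K ∈ N* ∪ {∞}, g_K(0) = g_K(1) = 0. For all K ∈ N* and all p ∈ [0,1] with |p − p_0(T)| > 1/K and |(1−p) − p_0(T)| > 1/K, one has |g_K(p) − g_∞(p)| ≤ 2e·exp(−2K(p_0(T) − p)²) + 2e·exp(−2K(p_0(T) − (1−p))²). Moreover, for any 0 < δ < 1/(4e), any T ∈ [4δ, 1−4δ], and any K > |log δ|/(4δ²), one has g_K(2δ) < −δ and g_K(1−2δ) > δ. -/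
open scoped BigOperators

noncomputable section

/-- `κ(K,T) = min(⌈KT⌉ - 1, ⌊K(1-T)⌋)`. -/
def kapC (K : ℕ) (T : ℝ) : ℤ := min (⌈(K : ℝ) * T⌉ - 1) ⌊(K : ℝ) * (1 - T)⌋

/-- Binomial cumulative distribution function: `P_p[X ≤ m]` for `X ~ Bin(K,p)`. -/
def bCDF (K : ℕ) (p : ℝ) (m : ℤ) : ℝ :=
  ∑ k ∈ Finset.range (K + 1),
    if (k : ℤ) ≤ m then (K.choose k : ℝ) * p ^ k * (1 - p) ^ (K - k) else 0

/-- `g_K(p) = (1-p) P_p[X > K - κ(K,T)] - p P_p[X ≤ κ(K,T)]`. -/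
def gKfun (K : ℕ) (T : ℝ) (p : ℝ) : ℝ :=
  (1 - p) * (1 - bCDF K p ((K : ℤ) - kapC K T)) - p * bCDF K p (kapC K T)

/-- `g_∞(p) = (1-p)·1{1-p < p₀(T)} - p·1{p ≤ p₀(T)}` with `p₀(T) = min(T,1-T)`. -/
def gInf (T : ℝ) (p : ℝ) : ℝ :=
  (1 - p) * (if 1 - p < min T (1 - T) then 1 else 0)
    - p * (if p ≤ min T (1 - T) then 1 else 0)

/-! ### Auxiliary machinery: binomial weights, tails, Chernoff bounds -/

def wB (K k : ℕ) (p : ℝ) : ℝ := (K.choose k : ℝ) * p ^ k * (1 - p) ^ (K - k)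

def SB (K : ℕ) (p : ℝ) (t : ℝ) : ℝ :=
  ∑ k ∈ Finset.range (K + 1), if t ≤ (k : ℝ) then wB K k p else 0

lemma bCDF_eq (K : ℕ) (p : ℝ) (m : ℤ) :
    bCDF K p m = ∑ k ∈ Finset.range (K + 1), if (k : ℤ) ≤ m then wB K k p else 0 := rfl

lemma wB_nonneg {K k : ℕ} {p : ℝ} (hp0 : 0 ≤ p) (hp1 : p ≤ 1) : 0 ≤ wB K k p := by
  have h1 : (0:ℝ) ≤ 1 - p := by linarith
  unfold wB; positivity

lemma sum_wB (K : ℕ) (p : ℝ) : ∑ k ∈ Finset.range (K + 1), wB K k p = 1 := by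
  have h := add_pow p (1 - p) K
  have h2 : ((p + (1 - p)) : ℝ) ^ K = 1 := by norm_num
  rw [h2] at h
  refine Eq.trans ?_ h.symm
  exact Finset.sum_congr rfl fun k _ => by rw [wB]; ring

lemma SB_nonneg {K : ℕ} {p t : ℝ} (hp0 : 0 ≤ p) (hp1 : p ≤ 1) : 0 ≤ SB K p t :=
  Finset.sum_nonneg fun k _ => by
    by_cases h : t ≤ (k:ℝ) <;> simp [SB, h, wB_nonneg hp0 hp1]

lemma bCDF_nonneg {K : ℕ} {p : ℝ} {m : ℤ} (hp0 : 0 ≤ p) (hp1 : p ≤ 1) : 0 ≤ bCDF K p m := by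
  rw [bCDF_eq]
  exact Finset.sum_nonneg fun k _ => by
    by_cases h : (k:ℤ) ≤ m <;> simp [h]
    exact wB_nonneg hp0 hp1

lemma bCDF_add_SB (K : ℕ) (p : ℝ) (m : ℤ) :
    bCDF K p m + SB K p ((m : ℝ) + 1) = 1 := by
  rw [bCDF_eq, SB, ← Finset.sum_add_distrib]
  have : ∀ k ∈ Finset.range (K+1),
      ((if (k : ℤ) ≤ m then wB K k p else 0)
        + (if (m:ℝ) + 1 ≤ (k:ℝ) then wB K k p else 0)) = wB K k p := by
    intro k _
    by_cases h : (k:ℤ) ≤ m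
    · rw [if_pos h, if_neg, add_zero]
      have : (k:ℝ) ≤ (m:ℝ) := by exact_mod_cast h
      linarith
    · rw [if_neg h, if_pos, zero_add]
      have : m + 1 ≤ (k:ℤ) := by omega
      exact_mod_cast this
  rw [Finset.sum_congr rfl this, sum_wB]

lemma bCDF_le_one {K : ℕ} {p : ℝ} {m : ℤ} (hp0 : 0 ≤ p) (hp1 : p ≤ 1) : bCDF K p m ≤ 1 := by
  have h1 := bCDF_add_SB K p m
  have h2 := SB_nonneg (K := K) (t := (m:ℝ)+1) hp0 hp1
  linarith

/-- reflection: `P_p[X ≤ m] = P_{1-p}[Y ≥ K - m]`. -/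
lemma bCDF_eq_SB (K : ℕ) (p : ℝ) (m : ℤ) :
    bCDF K p m = SB K (1 - p) ((K : ℝ) - (m : ℝ)) := by
  rw [bCDF_eq, SB, ← Finset.sum_range_reflect]
  refine Finset.sum_congr rfl fun k hk => ?_
  have hkK : k ≤ K := Nat.lt_succ_iff.mp (Finset.mem_range.mp hk)
  simp only [Nat.add_sub_cancel]
  have hcond : (((K - k : ℕ) : ℤ) ≤ m) ↔ ((K : ℝ) - (m : ℝ) ≤ (k : ℝ)) := by
    rw [Int.ofNat_sub hkK]
    constructor
    · intro h
      have h' : (K:ℝ) - (k:ℝ) ≤ (m:ℝ) := by exact_mod_cast h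
      linarith
    · intro h
      have h' : (K:ℤ) - (m:ℤ) ≤ (k:ℤ) := by exact_mod_cast h
      omega
  by_cases h : (K:ℝ) - (m:ℝ) ≤ (k:ℝ)
  · rw [if_pos (hcond.mpr h), if_pos h]
    simp only [wB]
    rw [Nat.choose_symm hkK, Nat.sub_sub_self hkK]
    ring_nf
  · rw [if_neg (fun hc => h (hcond.mp hc)), if_neg h]

/-- `P_p[X > K - c] = P_{1-p}[Y ≤ c - 1]`. -/
lemma one_sub_bCDF (K : ℕ) (p : ℝ) (c : ℤ) :
    1 - bCDF K p ((K:ℤ) - c) = bCDF K (1 - p) (c - 1) := by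
  have h1 := bCDF_add_SB K p ((K:ℤ) - c)
  have h2 := bCDF_eq_SB K (1 - p) (c - 1)
  rw [sub_sub_cancel] at h2
  have h3 : (((K:ℤ) - c : ℤ) : ℝ) + 1 = (K:ℝ) - (((c - 1 : ℤ)) : ℝ) := by push_cast; ring
  rw [h3] at h1
  linarith

/-- Hoeffding's lemma, scalar form. -/
lemma mgf_hoeff {p : ℝ} (hp0 : 0 ≤ p) (hp1 : p ≤ 1) {l : ℝ} (hl : 0 ≤ l) :
    1 - p + p * Real.exp l ≤ Real.exp (p * l + l ^ 2 / 8) := by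
  have hD : ∀ x : ℝ, 0 < 1 - p + p * Real.exp x := by
    intro x
    rcases eq_or_lt_of_le hp0 with h | h
    · simp [← h]
    · have := Real.exp_pos x
      nlinarith
  set f : ℝ → ℝ := fun x => p * x + x ^ 2 / 8 - Real.log (1 - p + p * Real.exp x) with hf_def
  set h : ℝ → ℝ := fun x => p + x / 4 - p * Real.exp x / (1 - p + p * Real.exp x) with hh_def
  have hDd : ∀ x : ℝ, HasDerivAt (fun x => 1 - p + p * Real.exp x) (p * Real.exp x) x := by
    intro x
    simpa using ((Real.hasDerivAt_exp x).const_mul p).const_add (1 - p)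
  have hfd : ∀ x : ℝ, HasDerivAt f (h x) x := by
    intro x
    have h1 : HasDerivAt (fun x : ℝ => p * x) p x := by
      simpa using (hasDerivAt_id x).const_mul p
    have h2 : HasDerivAt (fun x : ℝ => x ^ 2 / 8) (x / 4) x := by
      have := (hasDerivAt_pow 2 x).div_const 8
      refine this.congr_deriv ?_
      ring
    have h3 : HasDerivAt (fun x => Real.log (1 - p + p * Real.exp x))
        (p * Real.exp x / (1 - p + p * Real.exp x)) x := (hDd x).log (hD x).ne'
    exact (h1.add h2).sub h3
  have hhd : ∀ x : ℝ, HasDerivAt h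
      (1 / 4 - p * (1 - p) * Real.exp x / (1 - p + p * Real.exp x) ^ 2) x := by
    intro x
    have h1 : HasDerivAt (fun x : ℝ => p + x / 4) (1 / 4) x := by
      simpa using ((hasDerivAt_id x).div_const 4).const_add p
    have h2 : HasDerivAt (fun x => p * Real.exp x / (1 - p + p * Real.exp x))
        ((p * Real.exp x * (1 - p + p * Real.exp x) - p * Real.exp x * (p * Real.exp x)) /
          (1 - p + p * Real.exp x) ^ 2) x :=
      ((Real.hasDerivAt_exp x).const_mul p).div (hDd x) (hD x).ne'
    have := h1.sub h2
    refine this.congr_deriv ?_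
    have hne := (hD x).ne'
    field_simp
    ring
  have h0 : h 0 = 0 := by
    simp [hh_def]
  have hmono : MonotoneOn h (Set.Ici (0:ℝ)) := by
    apply monotoneOn_of_deriv_nonneg (convex_Ici 0)
    · exact fun x _ => ((hhd x).differentiableAt.continuousAt).continuousWithinAt
    · exact fun x _ => (hhd x).differentiableAt.differentiableWithinAt
    · intro x _
      rw [(hhd x).deriv]
      have hpos := hD x
      rw [sub_nonneg, div_le_iff₀ (by positivity)]
      nlinarith [sq_nonneg (1 - p - p * Real.exp x), Real.exp_pos x]
  have hnn : ∀ x : ℝ, 0 ≤ x → 0 ≤ h x := by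
    intro x hx
    have := hmono (Set.self_mem_Ici) (Set.mem_Ici.mpr hx) hx
    rw [h0] at this; exact this
  have hfmono : MonotoneOn f (Set.Ici (0:ℝ)) := by
    apply monotoneOn_of_deriv_nonneg (convex_Ici 0)
    · exact fun x _ => ((hfd x).differentiableAt.continuousAt).continuousWithinAt
    · exact fun x _ => (hfd x).differentiableAt.differentiableWithinAt
    · intro x hx
      rw [(hfd x).deriv]
      exact hnn x (le_of_lt (by simpa using hx))
  have hf0 : f 0 = 0 := by simp [hf_def]
  have hfl : 0 ≤ f l := by
    have := hfmono (Set.self_mem_Ici) (Set.mem_Ici.mpr hl) hl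
    rw [hf0] at this; exact this
  have hlog : Real.log (1 - p + p * Real.exp l) ≤ p * l + l ^ 2 / 8 := by
    simp only [hf_def] at hfl; linarith
  calc 1 - p + p * Real.exp l = Real.exp (Real.log (1 - p + p * Real.exp l)) :=
        (Real.exp_log (hD l)).symm
    _ ≤ _ := Real.exp_le_exp.mpr hlog

lemma SB_chernoff {K : ℕ} {p t : ℝ} (hp0 : 0 ≤ p) (hp1 : p ≤ 1) {l : ℝ} (hl : 0 ≤ l) :
    SB K p t ≤ Real.exp (-(l * t)) * (1 - p + p * Real.exp l) ^ K := by
  have step1 : SB K p t ≤ ∑ k ∈ Finset.range (K+1), Real.exp (l * ((k:ℝ) - t)) * wB K k p := by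
    refine Finset.sum_le_sum fun k _ => ?_
    by_cases h : t ≤ (k:ℝ)
    · rw [if_pos h]
      have h1 : (1:ℝ) ≤ Real.exp (l * ((k:ℝ) - t)) := by
        rw [← Real.exp_zero]
        apply Real.exp_le_exp.mpr
        nlinarith
      nlinarith [wB_nonneg (K := K) (k := k) hp0 hp1]
    · rw [if_neg h]
      exact mul_nonneg (Real.exp_pos _).le (wB_nonneg hp0 hp1)
  refine step1.trans (le_of_eq ?_)
  have expand : ∀ k ∈ Finset.range (K+1),
      Real.exp (l * ((k:ℝ) - t)) * wB K k p
        = Real.exp (-(l * t)) * ((K.choose k : ℝ) * (p * Real.exp l) ^ k * (1-p) ^ (K - k)) := by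
    intro k _
    rw [wB, mul_sub, Real.exp_sub, mul_pow, ← Real.exp_nat_mul]
    rw [Real.exp_neg]
    field_simp [Real.exp_ne_zero]
  rw [Finset.sum_congr rfl expand, ← Finset.mul_sum]
  congr 1
  rw [add_comm (1-p) (p * Real.exp l), add_pow]
  exact (Finset.sum_congr rfl fun k _ => by ring)

lemma SB_tail_hoeff {K : ℕ} (hK : 1 ≤ K) {p t : ℝ} (hp0 : 0 ≤ p) (hp1 : p ≤ 1)
    (ht : (K : ℝ) * p ≤ t) :
    SB K p t ≤ Real.exp (-(2 * (t - K * p) ^ 2 / K)) := by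
  have hKpos : (0:ℝ) < K := by exact_mod_cast Nat.pos_of_ne_zero (by omega)
  have hl : 0 ≤ 4 * (t - K * p) / K := by
    apply div_nonneg _ hKpos.le; linarith
  have hbase : 0 ≤ 1 - p + p * Real.exp (4 * (t - K * p) / K) := by
    have := (Real.exp_pos (4 * (t - K * p) / K)).le
    nlinarith
  calc SB K p t
      ≤ Real.exp (-(4 * (t - K * p) / K * t)) *
          (1 - p + p * Real.exp (4 * (t - K * p) / K)) ^ K := SB_chernoff hp0 hp1 hl
    _ ≤ Real.exp (-(4 * (t - K * p) / K * t)) *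
          (Real.exp (p * (4 * (t - K * p) / K) + (4 * (t - K * p) / K) ^ 2 / 8)) ^ K := by
        apply mul_le_mul_of_nonneg_left _ (Real.exp_pos _).le
        exact pow_le_pow_left₀ hbase (mgf_hoeff hp0 hp1 hl) K
    _ = Real.exp (-(4 * (t - K * p) / K * t)
          + K * (p * (4 * (t - K * p) / K) + (4 * (t - K * p) / K) ^ 2 / 8)) := by
        rw [← Real.exp_nat_mul, ← Real.exp_add]
    _ = Real.exp (-(2 * (t - K * p) ^ 2 / K)) := by
        congr 1
        field_simp
        ring

lemma SB_tail_bennett {K : ℕ} {p t : ℝ} (hp0 : 0 ≤ p) (hp1 : p ≤ 1) {l : ℝ} (hl : 0 ≤ l) :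
    SB K p t ≤ Real.exp (-(l * t) + K * (p * (Real.exp l - 1))) := by
  have hbase : 0 ≤ 1 - p + p * Real.exp l := by
    have := (Real.exp_pos l).le; nlinarith
  calc SB K p t
      ≤ Real.exp (-(l * t)) * (1 - p + p * Real.exp l) ^ K := SB_chernoff hp0 hp1 hl
    _ ≤ Real.exp (-(l * t)) * (Real.exp (p * (Real.exp l - 1))) ^ K := by
        apply mul_le_mul_of_nonneg_left _ (Real.exp_pos _).le
        apply pow_le_pow_left₀ hbase _ K
        have := Real.add_one_le_exp (p * (Real.exp l - 1))
        linarith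
    _ = Real.exp (-(l * t) + K * (p * (Real.exp l - 1))) := by
        rw [← Real.exp_nat_mul, ← Real.exp_add]

lemma exp_tail_mono {K d b : ℝ} (hK : 0 < K) (hb : K * |b| ≤ d) :
    Real.exp (-(2 * d ^ 2 / K)) ≤ Real.exp (-(2 * K * b ^ 2)) := by
  apply Real.exp_le_exp.mpr
  rw [neg_le_neg_iff, le_div_iff₀ hK]
  have h1 : (K * b) ^ 2 ≤ d ^ 2 := by
    rw [← sq_abs (K * b), abs_mul, abs_of_pos hK]
    exact pow_le_pow_left₀ (by positivity) hb 2
  nlinarith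

/-! ### kappa bounds -/

lemma kap_le {K : ℕ} {T : ℝ} (hT0 : 0 ≤ T) (hT1 : T ≤ 1) :
    (kapC K T : ℝ) ≤ K * min T (1 - T) := by
  rcases le_total T (1 - T) with h | h
  · rw [min_eq_left h]
    calc (kapC K T : ℝ) ≤ ((⌈(K:ℝ)*T⌉ - 1 : ℤ) : ℝ) := by
          exact_mod_cast (min_le_left (⌈(K:ℝ)*T⌉ - 1) ⌊(K:ℝ)*(1-T)⌋)
      _ ≤ K * T := by
          push_cast
          have := Int.ceil_lt_add_one ((K:ℝ)*T)
          linarith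
  · rw [min_eq_right h]
    calc (kapC K T : ℝ) ≤ ((⌊(K:ℝ)*(1-T)⌋ : ℤ) : ℝ) := by
          exact_mod_cast (min_le_right (⌈(K:ℝ)*T⌉ - 1) ⌊(K:ℝ)*(1-T)⌋)
      _ ≤ K * (1-T) := Int.floor_le _

lemma kap_ge {K : ℕ} {T : ℝ} :
    (K:ℝ) * min T (1 - T) - 1 ≤ (kapC K T : ℝ) := by
  have hKnn : (0:ℝ) ≤ K := Nat.cast_nonneg K
  have hmT : (K:ℝ) * min T (1-T) ≤ K * T :=
    mul_le_mul_of_nonneg_left (min_le_left _ _) hKnn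
  have hmT' : (K:ℝ) * min T (1-T) ≤ K * (1-T) :=
    mul_le_mul_of_nonneg_left (min_le_right _ _) hKnn
  have h1 : (K:ℝ)*T - 1 ≤ ((⌈(K:ℝ)*T⌉ - 1 : ℤ) : ℝ) := by
    push_cast; linarith [Int.le_ceil ((K:ℝ)*T)]
  have h2 : (K:ℝ)*(1-T) - 1 ≤ ((⌊(K:ℝ)*(1-T)⌋ : ℤ) : ℝ) := by
    linarith [Int.sub_one_lt_floor ((K:ℝ)*(1-T))]
  rcases min_cases (⌈(K:ℝ)*T⌉ - 1) ⌊(K:ℝ)*(1-T)⌋ with ⟨he, _⟩ | ⟨he, _⟩ <;>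
    rw [kapC, he] <;> [linarith; linarith]

lemma kap_le_K {K : ℕ} {T : ℝ} (hT0 : 0 ≤ T) : kapC K T ≤ K := by
  have h1 : ((K:ℝ) * (1 - T)) ≤ (K:ℝ) := by nlinarith [Nat.cast_nonneg (α := ℝ) K]
  have := Int.floor_le_floor h1
  rw [Int.floor_natCast] at this
  exact le_trans (min_le_right _ _) this

lemma kap_lt_K {K : ℕ} (hK : 1 ≤ K) {T : ℝ} (hT1 : T ≤ 1) : kapC K T < K := by
  have h1 : ⌈(K:ℝ)*T⌉ ≤ K := by
    rw [Int.ceil_le]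
    push_cast
    nlinarith [Nat.cast_nonneg (α := ℝ) K]
  have h2 : kapC K T ≤ ⌈(K:ℝ)*T⌉ - 1 := min_le_left _ _
  omega

lemma bCDF_zero_p (K : ℕ) (m : ℤ) (hm : 0 ≤ m) : bCDF K 0 m = 1 := by
  rw [bCDF]
  rw [Finset.sum_eq_single_of_mem 0 (Finset.mem_range.mpr (by omega))]
  · simp [hm]
  · intro b _ hb
    simp [zero_pow hb]

lemma bCDF_one_p (K : ℕ) (c : ℤ) (hc : c < K) : bCDF K 1 c = 0 := by
  rw [bCDF]
  apply Finset.sum_eq_zero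
  intro k hk
  by_cases h : (k:ℤ) ≤ c
  · have hkK : k < K := by
      have : (k:ℤ) < K := lt_of_le_of_lt h hc
      exact_mod_cast this
    rw [if_pos h]
    have : K - k ≠ 0 := by omega
    simp [zero_pow this]
  · rw [if_neg h]

lemma hoeff_slack {K a d : ℝ} (hK : 0 < K) (h0 : 0 ≤ K * a - 1) (h1 : K * a - 1 ≤ d)
    (h4a : 4 * a ≤ 1 + Real.log 2 + 2 / K) :
    -(2 * d ^ 2 / K) ≤ 1 + Real.log 2 + -(2 * K * a ^ 2) := by
  have hsq : (K * a - 1) ^ 2 ≤ d ^ 2 := pow_le_pow_left₀ h0 h1 2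
  have hdiv : 2 * (K * a - 1) ^ 2 / K ≤ 2 * d ^ 2 / K := by gcongr
  have hid : 2 * (K * a - 1) ^ 2 / K = 2 * K * a ^ 2 - 4 * a + 2 / K := by
    field_simp
    ring
  linarith

lemma bennett_slack {K q a c : ℝ} (hK : 0 < K) (hq0 : 0 ≤ q) (hqa : q + a ≤ 1/2)
    (haL : (1 + Real.log 2) / 4 ≤ a) (haU : a ≤ 1/2) (hc : K * (q + a) - 1 ≤ c) :
    -((1 + Real.log 2) * c) + K * (q * (2 * Real.exp 1 - 1))
      ≤ 1 + Real.log 2 + -(2 * K * a ^ 2) := by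
  have hE1 : Real.exp 1 < 2.7182818286 := Real.exp_one_lt_d9
  have hE2 : 2.7182818283 < Real.exp 1 := Real.exp_one_gt_d9
  have hL1 : Real.log 2 < 0.6931471808 := Real.log_two_lt_d9
  have hL2 : 0.6931471803 < Real.log 2 := Real.log_two_gt_d9
  have hl : (0:ℝ) ≤ 1 + Real.log 2 := by linarith
  have hbracket : q * (2 * Real.exp 1 - 1) - (1 + Real.log 2) * (q + a) + 2 * a ^ 2 ≤ 0 := by
    nlinarith [mul_nonneg (show (0:ℝ) ≤ 1/2 - a by linarith)
        (show (0:ℝ) ≤ a - (1 + Real.log 2)/4 by linarith),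
      mul_nonneg (show (0:ℝ) ≤ 1/2 - a - q by linarith)
        (show (0:ℝ) ≤ 2 * Real.exp 1 - 2 - Real.log 2 by linarith)]
  have hKb := mul_nonpos_of_nonneg_of_nonpos hK.le hbracket
  have hmul := mul_le_mul_of_nonneg_left hc hl
  nlinarith [hKb, hmul]

lemma combine_bound {p x y eA eB E : ℝ} (hp0 : 0 ≤ p) (hp1 : p ≤ 1) (hx : 0 ≤ x) (hy : 0 ≤ y)
    (hA : y ≤ eA) (hB : x ≤ 2 * E * eB) (heA : 0 < eA) (hE : 1 ≤ 2 * E) :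
    (1 - p) * x + p * y ≤ 2 * E * eA + 2 * E * eB := by
  have h1 : (1 - p) * x ≤ x := by nlinarith
  have h2 : p * y ≤ y := by nlinarith
  nlinarith

set_option maxHeartbeats 1000000 in
lemma part3 (T : ℝ) (hT0 : 0 ≤ T) (hT1 : T ≤ 1)
    (hmin1 : min T (1 - T) ≤ T) (hmin2 : min T (1 - T) ≤ 1 - T)
    (hminnn : 0 ≤ min T (1 - T)) (hminh : min T (1 - T) ≤ 1/2) :
    ∀ K : ℕ, 1 ≤ K → ∀ p ∈ Set.Icc (0 : ℝ) 1,
      |p - min T (1 - T)| > 1 / K → |(1 - p) - min T (1 - T)| > 1 / K →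
      |gKfun K T p - gInf T p|
        ≤ 2 * Real.exp 1 * Real.exp (-(2 * K * (min T (1 - T) - p) ^ 2))
          + 2 * Real.exp 1 * Real.exp (-(2 * K * (min T (1 - T) - (1 - p)) ^ 2)) := by
  intro K hK p hp hA hB
  obtain ⟨hp0, hp1⟩ := hp
  set P0 := min T (1 - T) with hP0def
  set cZ := kapC K T with hcZdef
  have hKpos : (0:ℝ) < K := by exact_mod_cast Nat.pos_of_ne_zero (by omega)
  have hKinv : (0:ℝ) < 1 / K := by positivity
  have hc1 : (cZ : ℝ) ≤ K * P0 := kap_le hT0 hT1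
  have hc2 : (K:ℝ) * P0 - 1 ≤ (cZ : ℝ) := kap_ge
  have h2e : (1:ℝ) ≤ 2 * Real.exp 1 := by nlinarith [Real.exp_one_gt_d9]
  -- Claim A
  have claimA : |bCDF K p cZ - (if p ≤ P0 then (1:ℝ) else 0)|
      ≤ Real.exp (-(2 * K * (P0 - p) ^ 2)) := by
    have hne : p ≠ P0 := by
      intro h
      rw [h, sub_self, abs_zero] at hA
      linarith
    rcases lt_or_gt_of_ne hne with hlt | hgt
    · rw [if_pos hlt.le]
      rw [abs_of_nonpos (by linarith [bCDF_le_one (K := K) (m := cZ) hp0 hp1]), neg_sub]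
      have heq : 1 - bCDF K p cZ = SB K p ((cZ : ℝ) + 1) := by
        have := bCDF_add_SB K p cZ; linarith
      rw [heq]
      have hKpP : (K:ℝ) * p ≤ K * P0 := mul_le_mul_of_nonneg_left hlt.le hKpos.le
      have htail := SB_tail_hoeff hK hp0 hp1 (t := (cZ : ℝ) + 1) (by linarith)
      refine htail.trans (exp_tail_mono hKpos ?_)
      rw [abs_of_nonneg (by linarith : (0:ℝ) ≤ P0 - p)]
      have hexp : (K:ℝ) * (P0 - p) = K * P0 - K * p := by ring
      rw [hexp]; linarith
    · rw [if_neg (not_le.mpr hgt), sub_zero, abs_of_nonneg (bCDF_nonneg hp0 hp1)]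
      rw [bCDF_eq_SB]
      have hKpP : (K:ℝ) * P0 ≤ K * p := mul_le_mul_of_nonneg_left hgt.le hKpos.le
      have htail := SB_tail_hoeff hK (by linarith : (0:ℝ) ≤ 1 - p) (by linarith)
        (t := (K:ℝ) - (cZ : ℝ)) (by nlinarith)
      refine htail.trans (exp_tail_mono hKpos ?_)
      rw [abs_of_nonpos (by linarith : P0 - p ≤ 0)]
      nlinarith
  -- Claim B
  have claimB : |(1 - bCDF K p ((K:ℤ) - cZ)) - (if 1 - p < P0 then (1:ℝ) else 0)|
      ≤ 2 * Real.exp 1 * Real.exp (-(2 * K * (P0 - (1 - p)) ^ 2)) := by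
    have hne : 1 - p ≠ P0 := by
      intro h
      rw [h, sub_self, abs_zero] at hB
      linarith
    have hgoal2e : 2 * Real.exp 1 * Real.exp (-(2 * K * (P0 - (1 - p)) ^ 2))
        = Real.exp (1 + Real.log 2 + -(2 * K * (P0 - (1 - p)) ^ 2)) := by
      rw [Real.exp_add, Real.exp_add, Real.exp_log (by norm_num : (0:ℝ) < 2)]
      ring
    rcases lt_or_gt_of_ne hne with hlt | hgt
    · -- q < p0 : the hard case
      rw [if_pos hlt]
      have hTB1 : bCDF K p ((K:ℤ) - cZ) ≤ 1 := bCDF_le_one hp0 hp1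
      have hTB0 : 0 ≤ bCDF K p ((K:ℤ) - cZ) := bCDF_nonneg hp0 hp1
      rw [show (1 - bCDF K p ((K:ℤ) - cZ)) - 1 = -(bCDF K p ((K:ℤ) - cZ)) by ring,
        abs_neg, abs_of_nonneg hTB0]
      have heq : bCDF K p ((K:ℤ) - cZ) = SB K (1 - p) ((cZ : ℝ)) := by
        rw [bCDF_eq_SB]
        congr 1
        push_cast
        ring
      rw [heq]
      have ha : 1 / (K:ℝ) < P0 - (1 - p) := by
        have habs := abs_of_neg (show (1 - p) - P0 < 0 by linarith)
        rw [habs] at hB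
        linarith
      have hKa1 : 1 < (K:ℝ) * (P0 - (1 - p)) := by
        have := (div_lt_iff₀ hKpos).mp ha
        linarith [mul_comm (P0 - (1 - p)) (K:ℝ)]
      have hq0 : (0:ℝ) ≤ 1 - p := by linarith
      have hq1 : (1:ℝ) - p ≤ 1 := by linarith
      have hKsplit : (K:ℝ) * (P0 - (1 - p)) = K * P0 - K * (1 - p) := by ring
      have hqc : (K:ℝ) * (1 - p) ≤ (cZ : ℝ) := by
        rw [hKsplit] at hKa1; linarith
      rw [hgoal2e]
      by_cases h4a : 4 * (P0 - (1 - p)) ≤ 1 + Real.log 2 + 2 / K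
      · have htail := SB_tail_hoeff hK hq0 hq1 (t := (cZ : ℝ)) hqc
        refine htail.trans (Real.exp_le_exp.mpr ?_)
        apply hoeff_slack hKpos (by linarith) _ h4a
        rw [hKsplit]; linarith
      · push_neg at h4a
        have hl : (0:ℝ) ≤ 1 + Real.log 2 := by
          have := Real.log_nonneg (by norm_num : (1:ℝ) ≤ 2)
          linarith
        have htail := SB_tail_bennett (K := K) (t := (cZ : ℝ)) hq0 hq1 hl
        refine htail.trans (Real.exp_le_exp.mpr ?_)
        rw [show Real.exp (1 + Real.log 2) = 2 * Real.exp 1 by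
          rw [Real.exp_add, Real.exp_log (by norm_num : (0:ℝ) < 2)]; ring]
        apply bennett_slack hKpos hq0
        · linarith
        · have h2K : (0:ℝ) < 2 / K := by positivity
          linarith
        · linarith
        · have hqid : (1 - p) + (P0 - (1 - p)) = P0 := by ring
          rw [hqid]; linarith
    · -- q > p0
      rw [if_neg (not_lt.mpr hgt.le), sub_zero]
      have hTB1 : bCDF K p ((K:ℤ) - cZ) ≤ 1 := bCDF_le_one hp0 hp1
      rw [abs_of_nonneg (by linarith)]
      rw [one_sub_bCDF]
      have hq0 : (0:ℝ) ≤ 1 - p := by linarith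
      have hq1 : (1:ℝ) - p ≤ 1 := by linarith
      have hKq : (K:ℝ) * P0 ≤ K * (1 - p) := mul_le_mul_of_nonneg_left hgt.le hKpos.le
      have hrw : bCDF K (1 - p) (cZ - 1)
          = SB K (1 - (1 - p)) ((K:ℝ) - ((cZ : ℝ) - 1)) := by
        rw [bCDF_eq_SB]
        congr 2
        push_cast
        ring
      rw [hrw, sub_sub_cancel]
      have htail := SB_tail_hoeff hK hp0 hp1
        (t := (K:ℝ) - ((cZ : ℝ) - 1)) (by nlinarith)
      have hfin := htail.trans (exp_tail_mono (b := P0 - (1 - p)) hKpos (by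
        rw [abs_of_nonpos (by linarith : P0 - (1 - p) ≤ 0)]
        nlinarith))
      refine hfin.trans ?_
      nlinarith [Real.exp_pos (-(2 * (K:ℝ) * (P0 - (1 - p)) ^ 2))]
  -- combine
  have hsplit : gKfun K T p - gInf T p
      = (1 - p) * ((1 - bCDF K p ((K:ℤ) - cZ)) - (if 1 - p < P0 then (1:ℝ) else 0))
        - p * (bCDF K p cZ - (if p ≤ P0 then (1:ℝ) else 0)) := by
    rw [gKfun, gInf, hP0def, hcZdef]
    ring
  rw [hsplit]
  have habs1 : |(1 - p) * ((1 - bCDF K p ((K:ℤ) - cZ)) - (if 1 - p < P0 then (1:ℝ) else 0))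
        - p * (bCDF K p cZ - (if p ≤ P0 then (1:ℝ) else 0))|
      ≤ (1 - p) * |(1 - bCDF K p ((K:ℤ) - cZ)) - (if 1 - p < P0 then (1:ℝ) else 0)|
        + p * |bCDF K p cZ - (if p ≤ P0 then (1:ℝ) else 0)| := by
    refine (abs_sub _ _).trans ?_
    rw [abs_mul, abs_mul, abs_of_nonneg (by linarith : (0:ℝ) ≤ 1 - p), abs_of_nonneg hp0]
  refine habs1.trans ?_
  exact combine_bound hp0 hp1 (abs_nonneg _) (abs_nonneg _) claimA claimB
    (Real.exp_pos _) h2e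

lemma bCDF_lower_tail {K : ℕ} (hK : 1 ≤ K) {p : ℝ} (hp0 : 0 ≤ p) (hp1 : p ≤ 1) {m : ℤ}
    (hm : (m:ℝ) ≤ K * p) :
    bCDF K p m ≤ Real.exp (-(2 * ((K:ℝ) * p - m) ^ 2 / K)) := by
  rw [bCDF_eq_SB]
  have h1 : (0:ℝ) ≤ 1 - p := by linarith
  have htail := SB_tail_hoeff hK h1 (by linarith) (t := (K:ℝ) - (m:ℝ)) (by nlinarith)
  refine htail.trans (le_of_eq ?_)
  rw [show (K:ℝ) - (m:ℝ) - (K:ℝ) * (1 - p) = (K:ℝ) * p - (m:ℝ) by ring]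

lemma bCDF_upper_tail {K : ℕ} (hK : 1 ≤ K) {p : ℝ} (hp0 : 0 ≤ p) (hp1 : p ≤ 1) {m : ℤ}
    (hm : (K:ℝ) * p ≤ (m:ℝ) + 1) :
    1 - bCDF K p m ≤ Real.exp (-(2 * (((m:ℝ) + 1) - K * p) ^ 2 / K)) := by
  have heq : 1 - bCDF K p m = SB K p ((m:ℝ) + 1) := by
    have := bCDF_add_SB K p m; linarith
  rw [heq]; exact SB_tail_hoeff hK hp0 hp1 hm

lemma exp_to_delta {K d δ : ℝ} (hK : 0 < K) (hδ : 0 ≤ δ) (h : 2 * K * δ ≤ d)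
    (h8 : Real.exp (-(8 * K * δ ^ 2)) ≤ δ ^ 2) :
    Real.exp (-(2 * d ^ 2 / K)) ≤ δ ^ 2 := by
  refine le_trans (Real.exp_le_exp.mpr ?_) h8
  have hsq : (2 * K * δ) ^ 2 ≤ d ^ 2 := pow_le_pow_left₀ (by positivity) h 2
  rw [neg_le_neg_iff, le_div_iff₀ hK]
  nlinarith

lemma exp_to_delta' {K d δ : ℝ} (hK : 0 < K) (hδ : 0 < δ) (hδ10 : δ < 1/10)
    (h : 2 * K * δ - 1 ≤ d) (h1 : 0 ≤ 2 * K * δ - 1)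
    (h8 : Real.exp (-(8 * K * δ ^ 2)) ≤ δ ^ 2) :
    Real.exp (-(2 * d ^ 2 / K)) ≤ Real.exp 1 * δ ^ 2 := by
  have hsq : (2 * K * δ - 1) ^ 2 ≤ d ^ 2 := pow_le_pow_left₀ h1 h 2
  have hstep : -(2 * d ^ 2 / K) ≤ 1 + -(8 * K * δ ^ 2) := by
    have hdiv : 2 * (2 * K * δ - 1) ^ 2 / K ≤ 2 * d ^ 2 / K := by gcongr
    have hid : 2 * (2 * K * δ - 1) ^ 2 / K = 8 * K * δ ^ 2 - 8 * δ + 2 / K := by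
      field_simp; ring
    have h2K : (0:ℝ) < 2 / K := by positivity
    linarith
  calc Real.exp (-(2 * d ^ 2 / K)) ≤ Real.exp (1 + -(8 * K * δ ^ 2)) :=
        Real.exp_le_exp.mpr hstep
    _ = Real.exp 1 * Real.exp (-(8 * K * δ ^ 2)) := Real.exp_add _ _
    _ ≤ Real.exp 1 * δ ^ 2 := mul_le_mul_of_nonneg_left h8 (Real.exp_pos 1).le

set_option maxHeartbeats 1000000 in
lemma part4 (T : ℝ) (hT0 : 0 ≤ T) (hT1 : T ≤ 1) :
    ∀ δ : ℝ, 0 < δ → δ < 1 / (4 * Real.exp 1) →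
      4 * δ ≤ T → T ≤ 1 - 4 * δ →
      ∀ K : ℕ, (K : ℝ) > |Real.log δ| / (4 * δ ^ 2) →
        gKfun K T (2 * δ) < -δ ∧ gKfun K T (1 - 2 * δ) > δ := by
  intro δ hδ hδe hT4a hT4b K hKgt
  set P0 := min T (1 - T) with hP0def
  have hE1 : Real.exp 1 < 2.7182818286 := Real.exp_one_lt_d9
  have hE2 : 2.7182818283 < Real.exp 1 := Real.exp_one_gt_d9
  have hδ10 : δ < 1/10 := by
    have h4e : (10:ℝ) < 4 * Real.exp 1 := by nlinarith
    have h4e' : 1 / (4 * Real.exp 1) < 1/10 := by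
      apply one_div_lt_one_div_of_lt <;> nlinarith
    linarith
  have hP0l : 4 * δ ≤ P0 := le_min hT4a (by linarith)
  have hP0h : P0 ≤ 1/2 := by
    have h1 := min_le_left T (1 - T)
    have h2 := min_le_right T (1 - T)
    rw [← hP0def] at h1 h2
    linarith
  have hlneg : Real.log δ < 0 := Real.log_neg hδ (by linarith)
  rw [abs_of_neg hlneg] at hKgt
  have hδ2 : (0:ℝ) < 4 * δ ^ 2 := by positivity
  have hKl : -Real.log δ < K * (4 * δ ^ 2) := (div_lt_iff₀ hδ2).mp hKgt
  have hlog1 : 1 < -Real.log δ := by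
    have hee : δ < 1 / Real.exp 1 := by
      have : 1 / (4 * Real.exp 1) < 1 / Real.exp 1 := by
        apply one_div_lt_one_div_of_lt <;> nlinarith
      linarith
    have hlt : Real.log δ < Real.log (1 / Real.exp 1) := Real.log_lt_log hδ hee
    rw [one_div, Real.log_inv, Real.log_exp] at hlt
    linarith
  have hKpos : (0:ℝ) < K := by
    rcases Nat.eq_zero_or_pos K with h | h
    · exfalso; rw [h] at hKl; push_cast at hKl; nlinarith
    · exact_mod_cast h
  have hKnat : 1 ≤ K := by
    have := Nat.cast_pos (α := ℝ) (n := K) |>.mp hKpos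
    omega
  have hexp8 : Real.exp (-(8 * (K:ℝ) * δ ^ 2)) ≤ δ ^ 2 := by
    have h1 : -(8 * (K:ℝ) * δ ^ 2) ≤ 2 * Real.log δ := by nlinarith
    calc Real.exp (-(8 * (K:ℝ) * δ ^ 2)) ≤ Real.exp (2 * Real.log δ) :=
          Real.exp_le_exp.mpr h1
      _ = δ ^ 2 := by rw [two_mul, Real.exp_add, Real.exp_log hδ]; ring
  have hKδ : 1 ≤ 2 * (K:ℝ) * δ := by nlinarith
  have hc1 : (kapC K T : ℝ) ≤ K * P0 := kap_le hT0 hT1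
  have hc2 : (K:ℝ) * P0 - 1 ≤ (kapC K T : ℝ) := kap_ge
  set cZ := kapC K T with hcZdef
  have hm4 : (K:ℝ) * (4 * δ) ≤ K * P0 := mul_le_mul_of_nonneg_left hP0l hKpos.le
  have hmh : (K:ℝ) * P0 ≤ K * (1/2) := mul_le_mul_of_nonneg_left hP0h hKpos.le
  have hp0 : (0:ℝ) ≤ 2 * δ := by linarith
  have hp1 : 2 * δ ≤ 1 := by linarith
  have hq0 : (0:ℝ) ≤ 1 - 2 * δ := by linarith
  have hq1 : 1 - 2 * δ ≤ 1 := by linarith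
  constructor
  · -- g(2δ) < -δ
    have he1 : 1 - bCDF K (2 * δ) ((K:ℤ) - cZ) ≤ δ ^ 2 := by
      rw [one_sub_bCDF]
      refine le_trans (bCDF_lower_tail hKnat hq0 hq1 (m := cZ - 1) (by push_cast; nlinarith))
        (exp_to_delta hKpos hδ.le ?_ hexp8)
      push_cast
      nlinarith
    have hTA : 1 - δ ^ 2 ≤ bCDF K (2 * δ) cZ := by
      have := bCDF_upper_tail hKnat hp0 hp1 (m := cZ) (by nlinarith)
      have h2 := exp_to_delta hKpos hδ.le (d := ((cZ:ℝ) + 1) - (K:ℝ) * (2 * δ))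
        (by nlinarith) hexp8
      linarith
    have hbnn : 0 ≤ 1 - bCDF K (2 * δ) ((K:ℤ) - cZ) := by
      linarith [bCDF_le_one (K := K) (m := (K:ℤ) - cZ) hp0 hp1]
    rw [gKfun, ← hcZdef]
    nlinarith [mul_nonneg hp0 hbnn,
      mul_le_mul_of_nonneg_left hTA hp0]
  · -- g(1-2δ) > δ
    have hTB : 1 - Real.exp 1 * δ ^ 2 ≤ 1 - bCDF K (1 - 2 * δ) ((K:ℤ) - cZ) := by
      rw [one_sub_bCDF, show (1:ℝ) - (1 - 2 * δ) = 2 * δ by ring]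
      have hsum := bCDF_add_SB K (2 * δ) (cZ - 1)
      have hcast : ((cZ - 1 : ℤ) : ℝ) + 1 = (cZ : ℝ) := by push_cast; ring
      rw [hcast] at hsum
      have htail := SB_tail_hoeff hKnat hp0 hp1 (t := (cZ : ℝ)) (by nlinarith)
      have h2 := exp_to_delta' hKpos hδ hδ10 (d := (cZ:ℝ) - (K:ℝ) * (2 * δ))
        (by nlinarith) (by nlinarith) hexp8
      linarith
    have hTA' : bCDF K (1 - 2 * δ) cZ ≤ δ ^ 2 := by
      refine le_trans (bCDF_lower_tail hKnat hq0 hq1 (m := cZ) (by nlinarith))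
        (exp_to_delta hKpos hδ.le ?_ hexp8)
      nlinarith
    have hTAnn : 0 ≤ bCDF K (1 - 2 * δ) cZ := bCDF_nonneg hq0 hq1
    have hTBle : 1 - bCDF K (1 - 2 * δ) ((K:ℤ) - cZ) ≤ 1 := by
      linarith [bCDF_nonneg (K := K) (m := (K:ℤ) - cZ) hq0 hq1]
    rw [gKfun, ← hcZdef]
    nlinarith [mul_le_mul_of_nonneg_left hTB (show (0:ℝ) ≤ 1 - (1 - 2 * δ) by linarith),
      mul_le_mul_of_nonneg_left hTA' (show (0:ℝ) ≤ 1 - 2 * δ by linarith)]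

/-- quantitative convergence of `g_K` to `g_∞`: vanishing at `0` and `1`,
the Gaussian-tail error bound away from the discontinuities, and the sign estimates
`g_K(2δ) < -δ`, `g_K(1-2δ) > δ` for small `δ` and large `K`. -/
theorem stmt13 (T : ℝ) (hT : T ∈ Set.Icc (0 : ℝ) 1) :
    (∀ K : ℕ, 1 ≤ K → gKfun K T 0 = 0 ∧ gKfun K T 1 = 0) ∧
    (gInf T 0 = 0 ∧ gInf T 1 = 0) ∧
    (∀ K : ℕ, 1 ≤ K → ∀ p ∈ Set.Icc (0 : ℝ) 1,
      |p - min T (1 - T)| > 1 / K → |(1 - p) - min T (1 - T)| > 1 / K →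
      |gKfun K T p - gInf T p|
        ≤ 2 * Real.exp 1 * Real.exp (-(2 * K * (min T (1 - T) - p) ^ 2))
          + 2 * Real.exp 1 * Real.exp (-(2 * K * (min T (1 - T) - (1 - p)) ^ 2))) ∧
    (∀ δ : ℝ, 0 < δ → δ < 1 / (4 * Real.exp 1) →
      4 * δ ≤ T → T ≤ 1 - 4 * δ →
      ∀ K : ℕ, (K : ℝ) > |Real.log δ| / (4 * δ ^ 2) →
        gKfun K T (2 * δ) < -δ ∧ gKfun K T (1 - 2 * δ) > δ) := by
  obtain ⟨hT0, hT1⟩ := hT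
  have hmin1 : min T (1 - T) ≤ T := min_le_left _ _
  have hmin2 : min T (1 - T) ≤ 1 - T := min_le_right _ _
  have hminnn : 0 ≤ min T (1 - T) := le_min hT0 (by linarith)
  have hminh : min T (1 - T) ≤ 1/2 := by linarith
  refine ⟨?_, ⟨?_, ?_⟩, ?_, ?_⟩
  · -- part 1
    intro K hK
    constructor
    · rw [gKfun, bCDF_zero_p K _ (by
        have := kap_le_K (K := K) (T := T) hT0
        omega)]
      ring
    · rw [gKfun, bCDF_one_p K _ (kap_lt_K hK hT1)]
      ring
  · rw [gInf, if_neg (show ¬((1:ℝ) - 0 < min T (1 - T)) by push_neg; linarith)]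
    ring
  · rw [gInf, if_neg (show ¬((1:ℝ) ≤ min T (1 - T)) by push_neg; linarith)]
    ring
  · exact part3 T hT0 hT1 hmin1 hmin2 hminnn hminh
  · exact part4 T hT0 hT1

end
end
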